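/- arXiv:2010.00147 — 2 statements merged into one kernel-verified Lean document; each statement's English description precedes it below -/
import Mathlib

section
/- The only neat families of unweighted graphs are the family of paths {P_n}_{n≥1} and the family of stars {S_n}_{n≥1}: any neat family {G_n}_{n≥1} of simple connected graphs with G_n on n vertices (each vertex of weight 1) satisfies either G_n ≅ P_n for all n or G_n ≅ S_n for all n. -/
open scoped BigOperators
open scoped Classical

namespace CSF

/-! ## Extended chromatic symmetric functions of multigraphs

A (multi)graph on a vertex type `V` is given by a multiset of edges `E : Multiset (Sym2 V)`
(loops and multiple edges allowed).  Colours are positive integers `ℕ+`, and the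
(extended) chromatic symmetric function lives in `MvPowerSeries ℕ+ ℚ`, the power series
in the commuting variables `x_j`, `j : ℕ+`. -/

/-- A proper colouring of the multigraph with edge multiset `E`. -/
def Proper {V C : Type*} (E : Multiset (Sym2 V)) (κ : V → C) : Prop :=
  ∀ u v : V, s(u, v) ∈ E → κ u ≠ κ v

/-- The monomial `∏_v x_{κ(v)}^{w(v)}`, recorded as its exponent vector. -/
noncomputable def mon {V : Type*} [Fintype V] (w : V → ℕ) (κ : V → ℕ+) : ℕ+ →₀ ℕ :=
  ∑ v, Finsupp.single (κ v) (w v)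

/-- The extended chromatic symmetric function `X_{(G,w)}` of the weighted graph with
edge multiset `E` and vertex weights `w`: the coefficient of a monomial `m` is the number
of proper colourings `κ` with `∏_v x_{κ(v)}^{w(v)} = x^m`. -/
noncomputable def X {V : Type*} [Fintype V] (E : Multiset (Sym2 V)) (w : V → ℕ) :
    MvPowerSeries ℕ+ ℚ :=
  fun m => (Nat.card {κ : V → ℕ+ // Proper E κ ∧ mon w κ = m} : ℚ)

/-- The chromatic polynomial `χ_G(k)`: the number of proper colourings with `k` colours. -/
noncomputable def chrom {V : Type*} [Fintype V] (E : Multiset (Sym2 V)) (k : ℕ) : ℕ :=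
  Nat.card {κ : V → Fin k // Proper E κ}

/-- Edge multiset of the labelled path `P_n` on `Fin n`: edges `v_i v_{i+1}`. -/
def pathE (n : ℕ) : Multiset (Sym2 (Fin n)) :=
  ((Finset.univ : Finset (Fin n × Fin n)).filter
    (fun p => (p.1 : ℕ) + 1 = (p.2 : ℕ))).val.map (fun p => s(p.1, p.2))

/-- Edge multiset of the labelled star `S_n` on `Fin n`: edges `v_i v_n`, `i ∈ [n-1]`. -/
def starE (n : ℕ) : Multiset (Sym2 (Fin n)) :=
  ((Finset.univ : Finset (Fin n × Fin n)).filter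
    (fun p => (p.1 : ℕ) + 1 < n ∧ (p.2 : ℕ) + 1 = n)).val.map (fun p => s(p.1, p.2))

/-- Edge multiset of a disjoint union of graphs on `Fin (m i)`, `i : Fin k`. -/
noncomputable def unionE {k : ℕ} {m : Fin k → ℕ}
    (Es : ∀ i, Multiset (Sym2 (Fin (m i)))) : Multiset (Sym2 (Σ i, Fin (m i))) :=
  ∑ i, (Es i).map (Sym2.map (fun v => ⟨i, v⟩))

/-- Extended chromatic symmetric function of a disjoint union of weighted graphs. -/
noncomputable def Xunion {k : ℕ} {m : Fin k → ℕ}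
    (Es : ∀ i, Multiset (Sym2 (Fin (m i)))) (ws : ∀ i, Fin (m i) → ℕ) :
    MvPowerSeries ℕ+ ℚ :=
  X (unionE Es) (fun v => ws v.1 v.2)

/-- `X_{P_l}`: chromatic symmetric function of the disjoint union of unweighted paths
`P_{l_1} ∪ ⋯ ∪ P_{l_k}`. -/
noncomputable def XPaths (l : List ℕ) : MvPowerSeries ℕ+ ℚ :=
  Xunion (m := fun i : Fin l.length => l.get i) (fun i => pathE (l.get i)) (fun _ _ => 1)

/-- `X_{S_l}`: chromatic symmetric function of a disjoint union of unweighted stars. -/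
noncomputable def XStars (l : List ℕ) : MvPowerSeries ℕ+ ℚ :=
  Xunion (m := fun i : Fin l.length => l.get i) (fun i => starE (l.get i)) (fun _ _ => 1)

/-- `X_{(P_{ℓ(α)}, α)}`: the extended chromatic symmetric function of the path on
`ℓ(α)` vertices whose `i`-th vertex has weight `α_i`. -/
noncomputable def Xwpath (α : List ℕ) : MvPowerSeries ℕ+ ℚ :=
  X (pathE α.length) (fun i => α.get i)

/-! ## Symmetric functions -/

/-- The power sum symmetric function `p_i = ∑_j x_j^i`. -/
noncomputable def pS (i : ℕ) : MvPowerSeries ℕ+ ℚ :=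
  fun m => if ∃ j : ℕ+, m = Finsupp.single j i then 1 else 0

/-- The complete homogeneous symmetric function `h_i`. -/
noncomputable def hS (i : ℕ) : MvPowerSeries ℕ+ ℚ :=
  fun m => if (m.sum fun _ k => k) = i then 1 else 0

/-- The elementary symmetric function `e_i`. -/
noncomputable def eS (i : ℕ) : MvPowerSeries ℕ+ ℚ :=
  fun m => if ((m.sum fun _ k => k) = i ∧ ∀ j, m j ≤ 1) then 1 else 0

/-- `p_λ = p_{λ_1} ⋯ p_{λ_k}`. -/
noncomputable def pProd (l : List ℕ) : MvPowerSeries ℕ+ ℚ := (l.map pS).prod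
/-- `h_λ = h_{λ_1} ⋯ h_{λ_k}`. -/
noncomputable def hProd (l : List ℕ) : MvPowerSeries ℕ+ ℚ := (l.map hS).prod
/-- `e_λ = e_{λ_1} ⋯ e_{λ_k}`. -/
noncomputable def eProd (l : List ℕ) : MvPowerSeries ℕ+ ℚ := (l.map eS).prod

/-- The algebra `Sym` of symmetric functions, realized as the subalgebra of
`MvPowerSeries ℕ+ ℚ` generated by the elementary symmetric functions. -/
noncomputable def SymAlg : Subalgebra ℚ (MvPowerSeries ℕ+ ℚ) :=
  Algebra.adjoin ℚ {f | ∃ i : ℕ, f = eS (i + 1)}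

/-- Sort a list into weakly decreasing order (the underlying partition `α̃`). -/
def sortDesc (l : List ℕ) : List ℕ := List.insertionSort (· ≥ ·) l

/-- Partitions: weakly decreasing lists of positive integers. -/
abbrev PartL : Type := {l : List ℕ // l.Pairwise (· ≥ ·) ∧ ∀ x ∈ l, 0 < x}

/-! ## Compositions -/

/-- All coarsenings of a composition: lists obtained by summing adjacent blocks. -/
def coarsenings : List ℕ → List (List ℕ)
  | [] => [[]]
  | a :: l =>
    (coarsenings l).map (fun β => a :: β) ++
      (coarsenings l).filterMap (fun β =>
        match β with
        | [] => none
        | b :: β' => some ((a + b) :: β'))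

/-- The ribbon Schur function `r_α = ∑_{β ≽ α} (-1)^{ℓ(α) - ℓ(β)} h_{β̃}`. -/
noncomputable def ribbon (α : List ℕ) : MvPowerSeries ℕ+ ℚ :=
  ((coarsenings α).map fun β =>
    ((-1 : ℚ) ^ (α.length - β.length)) • hProd (sortDesc β)).sum

lemma sum_take_get_le (α : List ℕ) (b : Fin α.length) :
    (α.take b).sum + α.get b ≤ α.sum := by
  have h1 : (α.take (b + 1)).sum = (α.take b).sum + α[b] := List.sum_take_succ α b b.isLt
  have h2 : (α.take (b + 1)).sum ≤ α.sum := by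
    conv_rhs => rw [← List.take_append_drop (b + 1) α]
    rw [List.sum_append]
    exact Nat.le_add_right _ _
  simpa [List.get_eq_getElem, ← h1] using h2

/-- Shift a graph on `Fin m` by an offset `o` inside `Fin n`. -/
def shiftE {m n : ℕ} (o : ℕ) (h : o + m ≤ n) (E : Multiset (Sym2 (Fin m))) :
    Multiset (Sym2 (Fin n)) :=
  E.map (Sym2.map (fun v : Fin m => (⟨o + (v : ℕ), by have := v.isLt; omega⟩ : Fin n)))

/-- The labelled graph `G_{α_1} | G_{α_2} | ⋯ | G_{α_k}` on `Fin (α₁ + ⋯ + α_k)`: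
consecutive blocks of vertices carry the graphs `Gr (α_i)`. -/
noncomputable def concatE (α : List ℕ) (Gr : (k : ℕ) → Multiset (Sym2 (Fin k))) :
    Multiset (Sym2 (Fin α.sum)) :=
  ∑ b : Fin α.length,
    shiftE ((α.take b).sum) (sum_take_get_le α b) (Gr (α.get b))

/-- `set(α) = {α_1, α_1+α_2, …, α_1+⋯+α_{ℓ(α)-1}} ⊆ [n-1]`. -/
def setC (α : List ℕ) : Finset ℕ :=
  ((List.range (α.length - 1)).map (fun j => (α.take (j + 1)).sum)).toFinset

/-- The labelled graph on `Fin n` whose edges are `v_i v_{i+1}` for `i ∈ S` (1-based). -/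
def edgesFromSet (n : ℕ) (S : Finset ℕ) : Multiset (Sym2 (Fin n)) :=
  ((Finset.univ : Finset (Fin n × Fin n)).filter
    (fun p => (p.1 : ℕ) + 1 = (p.2 : ℕ) ∧ (p.2 : ℕ) ∈ S)).val.map (fun p => s(p.1, p.2))

/-- `γ = α^c`, the complement composition: the composition of `|α|` with
`set(γ) = [n-1] − set(α)`. -/
def IsComplementOf (γ α : List ℕ) : Prop :=
  (∀ x ∈ γ, 0 < x) ∧ γ.sum = α.sum ∧ setC γ = Finset.Ioo 0 α.sum \ setC α

/-- Near concatenation `α ⊙ β` of compositions. -/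
def nconcat : List ℕ → List ℕ → List ℕ
  | [], β => β
  | [a], [] => [a]
  | [a], b :: β => (a + b) :: β
  | a :: l, β => a :: nconcat l β

/-- `β^{⊙ i}`, the `i`-fold near concatenation of `β` with itself. -/
def npowOdot (β : List ℕ) : ℕ → List ℕ
  | 0 => []
  | i + 1 => nconcat (npowOdot β i) β

/-- Composition of compositions: `α ∘ β = β^{⊙α_1} · ⋯ · β^{⊙α_{ℓ(α)}}`. -/
def compOp (α β : List ℕ) : List ℕ := (α.map (npowOdot β)).flatten

/-- The equivalence `α ∼ β`: `α` and `β` have `∘`-factorizations whose factors agree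
up to reversal.  (`[1]` is a two-sided identity for `∘`, so the empty fold is harmless.) -/
def simRel (α β : List ℕ) : Prop :=
  ∃ L M : List (List ℕ),
    List.Forall₂ (fun γ δ => (γ ≠ [] ∧ ∀ x ∈ γ, 0 < x) ∧ (δ = γ ∨ δ = γ.reverse)) L M ∧
    α = L.foldr compOp [1] ∧ β = M.foldr compOp [1]

/-- A trivial factorization `α = β ∘ γ`. -/
def TrivialFac (β γ : List ℕ) : Prop :=
  β = [1] ∨ γ = [1] ∨ (β.length = 1 ∧ γ.length = 1) ∨
    ((∀ x ∈ β, x = 1) ∧ ∀ x ∈ γ, x = 1)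

/-- `L` is an irreducible factorization of `α`. -/
def IsIrreducibleFac (α : List ℕ) (L : List (List ℕ)) : Prop :=
  (∀ γ ∈ L, γ ≠ [] ∧ ∀ x ∈ γ, 0 < x) ∧
  α = L.foldr compOp [1] ∧
  (∀ i : ℕ, ∀ h : i + 1 < L.length,
    ¬ TrivialFac (L.get ⟨i, by omega⟩) (L.get ⟨i + 1, h⟩)) ∧
  (∀ γ ∈ L, ∀ δ ε : List ℕ, δ ≠ [] → (∀ x ∈ δ, 0 < x) → ε ≠ [] → (∀ x ∈ ε, 0 < x) →
    γ = compOp δ ε → TrivialFac δ ε)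

/-- All compositions of `n` (lists of positive integers with sum `n`). -/
def comps : ℕ → List (List ℕ)
  | 0 => [[]]
  | n + 1 => (List.range (n + 1)).attach.flatMap fun j =>
      (comps j.1).map (fun c => (n + 1 - j.1) :: c)
  decreasing_by exact List.mem_range.mp j.2

/-- All refinements `α ≼ λ` of a composition `λ`. -/
def refinements : List ℕ → List (List ℕ)
  | [] => [[]]
  | a :: l => (comps a).flatMap fun c => (refinements l).map (fun r => c ++ r)

/-- All compositions `α ⊆ λ`: `ℓ(α) = ℓ(λ)` and `1 ≤ α_i ≤ λ_i`. -/
def boundedLists : List ℕ → List (List ℕ)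
  | [] => [[]]
  | a :: l => (List.range a).flatMap fun j => (boundedLists l).map (fun r => (j + 1) :: r)

/-! ## Expansions of weighted graphs -/

/-- Given a decomposition `L` of `β` witnessing `β ≼ α`, vertex `a` of `H` is in the block
`R(v_v)` (0-based `v`) when `a` lies among the consecutively labelled vertices of block `v`. -/
def inBlock (L : List (List ℕ)) (v a : ℕ) : Prop :=
  ((L.take v).map List.length).sum ≤ a ∧ a < ((L.take (v + 1)).map List.length).sum

/-- The relation `a R b`: `a` and `b` lie in a common block `R(v)`. -/
def Rrel (L : List (List ℕ)) (a b : ℕ) : Prop :=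
  ∃ v : ℕ, inBlock L v a ∧ inBlock L v b

/-! ## The lattice of contractions and its Möbius function -/

/-- The restriction of the graph `E` to `B` is connected. -/
def ConnOn {V : Type*} (E : Multiset (Sym2 V)) (B : Set V) : Prop :=
  ∀ a ∈ B, ∀ b ∈ B, Relation.ReflTransGen (fun x y => x ∈ B ∧ y ∈ B ∧ s(x, y) ∈ E) a b

/-- A connected set partition of the graph `E` (as a setoid on the vertices). -/
def ConnPart {V : Type*} (E : Multiset (Sym2 V)) (σ : Setoid V) : Prop :=
  ∀ v : V, ConnOn E {u | σ.r u v}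

/-- The lattice of contractions `L_G`: connected set partitions ordered by refinement. -/
def LContr {V : Type*} (E : Multiset (Sym2 V)) : Type _ := {σ : Setoid V // ConnPart E σ}

noncomputable instance setoidFintype {V : Type*} [Fintype V] : Fintype (Setoid V) :=
  Fintype.ofInjective (fun s : Setoid V => s.r)
    (fun s t h => by cases s; cases t; simp only at h; subst h; rfl)

noncomputable instance {V : Type*} [Fintype V] (E : Multiset (Sym2 V)) : Fintype (LContr E) :=
  letI := Classical.decPred (ConnPart E)
  Subtype.fintype _

instance {V : Type*} (E : Multiset (Sym2 V)) : PartialOrder (LContr E) :=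
  Subtype.partialOrder _

noncomputable instance {V : Type*} [Fintype V] (E : Multiset (Sym2 V)) :
    LocallyFiniteOrder (LContr E) :=
  letI := Classical.decRel (α := LContr E) (· < ·)
  letI := Classical.decRel (α := LContr E) (· ≤ ·)
  Fintype.toLocallyFiniteOrder

/-- The Möbius function of the lattice of contractions. -/
noncomputable def mobLC {V : Type*} [Fintype V] (E : Multiset (Sym2 V))
    (x y : LContr E) : ℚ :=
  letI := Classical.decEq (LContr E)
  IncidenceAlgebra.mu ℚ x y

/-- `p_{type(π,w)}`: the product over the blocks of `π` of `p_{(total weight of block)}`. -/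
noncomputable def ptype {V : Type*} [Fintype V] (σ : Setoid V) (w : V → ℕ) :
    MvPowerSeries ℕ+ ℚ :=
  letI := Classical.decEq (Quotient σ)
  letI := @Quotient.fintype V _ σ (Classical.decRel _)
  ∏ c : Quotient σ, pS (∑ v : V, if Quotient.mk σ v = c then w v else 0)

/-- `0̂`, the minimal element of the lattice of contractions: each vertex is its own block. -/
def botLC {V : Type*} (E : Multiset (Sym2 V)) : LContr E :=
  ⟨⊥, by
    intro v a ha b hb
    have ha' : a = v := ha
    have hb' : b = v := hb
    subst ha'; subst hb'; exact Relation.ReflTransGen.refl⟩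

/-! ## Composition of a composition with a weighted graph -/

section comp
variable {V : Type*} [Fintype V]

/-- The gluing relation: for `i ∈ S` (1-based), identify the vertex `z` of copy `i`
with the vertex `a` of copy `i + 1` (0-based copies `i - 1` and `i`). -/
def glueRel (a z : V) (n : ℕ) (S : Finset ℕ) : (Fin n × V) → (Fin n × V) → Prop :=
  fun x y => ∃ i ∈ S, ∃ (h1 : i - 1 < n) (h2 : i < n),
    x = (⟨i - 1, h1⟩, z) ∧ y = (⟨i, h2⟩, a)

def glueSetoid (a z : V) (n : ℕ) (S : Finset ℕ) : Setoid (Fin n × V) :=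
  Relation.EqvGen.setoid (glueRel a z n S)

/-- Vertices of the graph obtained from `n` copies of a graph on `V` by contracting the
connecting edges `z_i a_{i+1}`, `i ∈ S`. -/
def compV (a z : V) (n : ℕ) (S : Finset ℕ) : Type _ := Quotient (glueSetoid a z n S)

noncomputable instance (a z : V) (n : ℕ) (S : Finset ℕ) : Fintype (compV a z n S) :=
  @Quotient.fintype _ _ (glueSetoid a z n S) (Classical.decRel _)

/-- Edges: all edges of the `n` copies of `E`, together with the connecting edges
`z_i a_{i+1}` for `i ∈ [n-1] − S` (the ones not contracted). -/
noncomputable def compE (E : Multiset (Sym2 V)) (a z : V) (n : ℕ) (S : Finset ℕ) :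
    Multiset (Sym2 (compV a z n S)) :=
  (∑ i : Fin n, E.map (Sym2.map fun v =>
      (Quotient.mk (glueSetoid a z n S) (i, v) : compV a z n S)))
  + ((Finset.Ioo 0 n \ S).attach.val.map fun i =>
      s((Quotient.mk (glueSetoid a z n S)
          (⟨i.1 - 1, by
            have := i.2; simp only [Finset.mem_sdiff, Finset.mem_Ioo] at this; omega⟩, z) :
            compV a z n S),
        (Quotient.mk (glueSetoid a z n S)
          (⟨i.1, by
            have := i.2; simp only [Finset.mem_sdiff, Finset.mem_Ioo] at this; omega⟩, a) :
            compV a z n S)))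

/-- Weights: a contracted vertex receives the sum of the weights of its constituents. -/
noncomputable def compW (w : V → ℕ) (a z : V) (n : ℕ) (S : Finset ℕ) :
    compV a z n S → ℕ :=
  fun c => ∑ x : Fin n × V,
    if (Quotient.mk (glueSetoid a z n S) x : compV a z n S) = c then w x.2 else 0

/-- `X_{α ∘ (G,w)}`: take `|α|` copies of `(G,w)`, join successive copies by edges
`z_i a_{i+1}`, and contract exactly the connecting edges with `i ∈ set(α^c)`. -/
noncomputable def Xcomp (E : Multiset (Sym2 V)) (w : V → ℕ) (a z : V) (α : List ℕ) :
    MvPowerSeries ℕ+ ℚ :=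
  X (compE E a z α.sum (Finset.Ioo 0 α.sum \ setC α))
    (compW w a z α.sum (Finset.Ioo 0 α.sum \ setC α))

end comp

def Reach {V : Type*} (E : Multiset (Sym2 V)) : V → V → Prop :=
  Relation.ReflTransGen (fun x y => s(x, y) ∈ E)

lemma reach_map {α β : Type*} {f : α → β} {A : Multiset (Sym2 α)} {u v : α}
    (h : Reach A u v) : Reach (A.map (Sym2.map f)) (f u) (f v) := by
  refine Relation.ReflTransGen.lift f (fun a b hab => (?_ : s(f a, f b) ∈ A.map (Sym2.map f))) _ _ h
  have := Multiset.mem_map_of_mem (Sym2.map f) hab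
  simpa using this

lemma map_symm_cancel {α β : Type*} (f : α ≃ β) (A : Multiset (Sym2 α)) :
    (A.map (Sym2.map f)).map (Sym2.map f.symm) = A := by
  rw [Multiset.map_map]
  have : (Sym2.map ⇑f.symm ∘ Sym2.map ⇑f) = id := by
    funext z; simp [Sym2.map_map]
  calc Multiset.map (Sym2.map ⇑f.symm ∘ Sym2.map ⇑f) A = Multiset.map id A := by rw [this]
    _ = A := Multiset.map_id A

lemma reach_transfer {α β : Type*} (f : α ≃ β) {A : Multiset (Sym2 α)}
    {B : Multiset (Sym2 β)} (h : A.map (Sym2.map f) = B) {u v : α} :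
    Reach A u v ↔ Reach B (f u) (f v) := by
  constructor
  · intro hr; have := reach_map (f := ⇑f) hr; rwa [h] at this
  · intro hr
    have := reach_map (f := ⇑f.symm) hr
    rw [← h, map_symm_cancel] at this
    simpa using this

lemma reach_exists_edge {V : Type*} {E : Multiset (Sym2 V)} {u v : V}
    (h : Reach E u v) (hne : u ≠ v) : ∃ w, s(u, w) ∈ E := by
  induction h using Relation.ReflTransGen.head_induction_on with
  | refl => exact absurd rfl hne
  | head h' _ _ => exact ⟨_, h'⟩

lemma mem_sub_singleton {V : Type*} [DecidableEq V] {E : Multiset (Sym2 V)} {z e : Sym2 V}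
    (hz : z ∈ E) (hne : z ≠ e) : z ∈ E - {e} := by
  rw [Multiset.sub_singleton]
  exact Multiset.mem_erase_of_ne hne |>.mpr hz

/-- Bridge lemma: after deleting edge `s(x,y)`, every vertex that reached `x`
reaches `x` or `y`. -/
lemma bridge {V : Type*} [DecidableEq V] {E : Multiset (Sym2 V)} {x y v : V}
    (h : Reach E v x) : Reach (E - {s(x, y)}) v x ∨ Reach (E - {s(x, y)}) v y := by
  induction h using Relation.ReflTransGen.head_induction_on with
  | refl => exact Or.inl Relation.ReflTransGen.refl
  | @head a c h' _ ih =>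
    by_cases hc : s(a, c) = s(x, y)
    · rcases Sym2.eq_iff.1 hc with ⟨rfl, rfl⟩ | ⟨rfl, rfl⟩
      · exact Or.inl Relation.ReflTransGen.refl
      · exact Or.inr Relation.ReflTransGen.refl
    · rcases ih with ih | ih
      · exact Or.inl (Relation.ReflTransGen.head (mem_sub_singleton h' hc) ih)
      · exact Or.inr (Relation.ReflTransGen.head (mem_sub_singleton h' hc) ih)

/-! ### unionE lemmas -/

lemma mem_unionE {k : ℕ} {m : Fin k → ℕ} {Es : ∀ i, Multiset (Sym2 (Fin (m i)))}
    {z : Sym2 (Σ i, Fin (m i))} :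
    z ∈ unionE Es ↔ ∃ i, ∃ e ∈ Es i, z = Sym2.map (fun v => (⟨i, v⟩ : Σ i, Fin (m i))) e := by
  simp [unionE, Multiset.mem_sum, Multiset.mem_map, eq_comm]

lemma unionE_edge_fst {k : ℕ} {m : Fin k → ℕ} {Es : ∀ i, Multiset (Sym2 (Fin (m i)))}
    {p q : Σ i, Fin (m i)} (h : s(p, q) ∈ unionE Es) : p.1 = q.1 := by
  rcases mem_unionE.1 h with ⟨i, e, _, he⟩
  induction e using Sym2.inductionOn with
  | hf a b =>
    rw [Sym2.map_pair_eq] at he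
    rcases Sym2.eq_iff.1 he with ⟨h1, h2⟩ | ⟨h1, h2⟩ <;>
      simp [h1, h2]

lemma reach_unionE_fst {k : ℕ} {m : Fin k → ℕ} {Es : ∀ i, Multiset (Sym2 (Fin (m i)))}
    {p q : Σ i, Fin (m i)} (h : Reach (unionE Es) p q) : p.1 = q.1 := by
  induction h using Relation.ReflTransGen.head_induction_on with
  | refl => rfl
  | head h' _ ih => exact (unionE_edge_fst h').trans ih

lemma reach_unionE_of_reach {k : ℕ} {m : Fin k → ℕ}
    {Es : ∀ i, Multiset (Sym2 (Fin (m i)))} {i : Fin k} {a b : Fin (m i)}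
    (h : Reach (Es i) a b) :
    Reach (unionE Es) ⟨i, a⟩ ⟨i, b⟩ := by
  refine Relation.ReflTransGen.lift (fun v => (⟨i, v⟩ : Σ i, Fin (m i)))
    (fun a b hab => (?_ : s((⟨i,a⟩ : Σ i, Fin (m i)), ⟨i,b⟩) ∈ unionE Es)) _ _ h
  rw [show (s((⟨i,a⟩ : Σ i, Fin (m i)), ⟨i,b⟩)) = Sym2.map (fun v => (⟨i,v⟩ : Σ i, Fin (m i))) s(a,b) by
    rw [Sym2.map_pair_eq]]
  exact mem_unionE.2 ⟨i, s(a,b), hab, rfl⟩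


lemma mem_pathE {n : ℕ} {z : Sym2 (Fin n)} :
    z ∈ pathE n ↔ ∃ i j : Fin n, (i : ℕ) + 1 = (j : ℕ) ∧ z = s(i, j) := by
  constructor
  · intro h
    rcases Multiset.mem_map.1 h with ⟨p, hp, rfl⟩
    rw [Finset.mem_val, Finset.mem_filter] at hp
    exact ⟨p.1, p.2, hp.2, rfl⟩
  · rintro ⟨i, j, hij, rfl⟩
    refine Multiset.mem_map.2 ⟨(i, j), ?_, rfl⟩
    rw [Finset.mem_val, Finset.mem_filter]
    exact ⟨Finset.mem_univ _, hij⟩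

lemma mem_starE {n : ℕ} {z : Sym2 (Fin n)} :
    z ∈ starE n ↔ ∃ i j : Fin n, (i : ℕ) + 1 < n ∧ (j : ℕ) + 1 = n ∧ z = s(i, j) := by
  constructor
  · intro h
    rcases Multiset.mem_map.1 h with ⟨p, hp, rfl⟩
    rw [Finset.mem_val, Finset.mem_filter] at hp
    exact ⟨p.1, p.2, hp.2.1, hp.2.2, rfl⟩
  · rintro ⟨i, j, hi, hj, rfl⟩
    refine Multiset.mem_map.2 ⟨(i, j), ?_, rfl⟩
    rw [Finset.mem_val, Finset.mem_filter]
    exact ⟨Finset.mem_univ _, hi, hj⟩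

lemma nodup_pathE {n : ℕ} : (pathE n).Nodup := by
  refine Multiset.Nodup.map_on ?_ (Finset.filter _ _).nodup
  intro p hp q hq hpq
  rw [Finset.mem_val, Finset.mem_filter] at hp hq
  rcases Sym2.eq_iff.1 hpq with ⟨h1, h2⟩ | ⟨h1, h2⟩
  · exact Prod.ext h1 h2
  · have e1 : (p.1 : ℕ) = q.2 := congrArg Fin.val h1
    have e2 : (p.2 : ℕ) = q.1 := congrArg Fin.val h2
    have := hp.2; have := hq.2; omega

lemma nodup_starE {n : ℕ} : (starE n).Nodup := by
  refine Multiset.Nodup.map_on ?_ (Finset.filter _ _).nodup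
  intro p hp q hq hpq
  rw [Finset.mem_val, Finset.mem_filter] at hp hq
  rcases Sym2.eq_iff.1 hpq with ⟨h1, h2⟩ | ⟨h1, h2⟩
  · exact Prod.ext h1 h2
  · have e1 : (p.1 : ℕ) = q.2 := congrArg Fin.val h1
    have e2 : (p.2 : ℕ) = q.1 := congrArg Fin.val h2
    obtain ⟨h3, h4⟩ := hp.2; obtain ⟨h5, h6⟩ := hq.2; omega

/-- Reversal preserves the path. -/
lemma pathE_map_rev {n : ℕ} :
    (pathE n).map (Sym2.map (fun i : Fin n => i.rev)) = pathE n := by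
  have hrev : Function.Injective (fun i : Fin n => i.rev) :=
    fun a b h => by simpa using congrArg Fin.rev h
  rw [(Multiset.Nodup.ext (Multiset.Nodup.map (Sym2.map.injective hrev) nodup_pathE)
    nodup_pathE)]
  intro z
  constructor
  · intro h
    rcases Multiset.mem_map.1 h with ⟨e, he, rfl⟩
    rcases mem_pathE.1 he with ⟨i, j, hij, rfl⟩
    rw [Sym2.map_pair_eq]
    refine mem_pathE.2 ⟨j.rev, i.rev, ?_, Sym2.eq_swap⟩
    have hi := i.isLt; have hj := j.isLt
    simp [Fin.val_rev]; omega
  · intro h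
    rcases mem_pathE.1 h with ⟨i, j, hij, rfl⟩
    refine Multiset.mem_map.2 ⟨s(j.rev, i.rev), mem_pathE.2 ⟨j.rev, i.rev, ?_, rfl⟩, ?_⟩
    · have hi := i.isLt; have hj := j.isLt
      simp [Fin.val_rev]; omega
    · rw [Sym2.map_pair_eq]
      simp only [Fin.rev_rev]
      exact Sym2.eq_swap

lemma pathE_one : pathE 1 = 0 := by decide

lemma starE_one : starE 1 = 0 := by decide

lemma pathE_two : pathE 2 = {s(0, 1)} := by decide

lemma starE_two : starE 2 = {s(0, 1)} := by decide

lemma pathE_four : pathE 4 = {s(0,1), s(1,2), s(2,3)} := by decide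

lemma starE_four : starE 4 = {s(0,3), s(1,3), s(2,3)} := by decide

lemma p3s3 : (pathE 3).map (Sym2.map (Equiv.swap (1 : Fin 3) 2)) = starE 3 := by decide

variable (Gs : ∀ n : ℕ, Multiset (Sym2 (Fin n)))

/-- The path and star on 4 vertices are not isomorphic. -/
lemma no_iso_path_star (f : Fin 4 → Fin 4) (hf : Function.Injective f) :
    (pathE 4).map (Sym2.map f) ≠ starE 4 := by
  intro h
  have hmem : ∀ z ∈ pathE 4, (3 : Fin 4) ∈ Sym2.map f z := by
    intro z hz
    have : Sym2.map f z ∈ starE 4 := h ▸ Multiset.mem_map_of_mem _ hz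
    revert this
    have : ∀ w ∈ starE 4, (3 : Fin 4) ∈ w := by decide
    exact fun hh => this _ hh
  have hp4 : pathE 4 = ({s(0,1), s(1,2), s(2,3)} : Multiset (Sym2 (Fin 4))) := by decide
  have h1 := hmem s(0,1) (by rw [hp4]; simp)
  have h2 := hmem s(1,2) (by rw [hp4]; simp)
  have h3 := hmem s(2,3) (by rw [hp4]; simp)
  rcases Sym2.mem_map.1 h1 with ⟨a1, ha1, hfa1⟩
  rcases Sym2.mem_map.1 h2 with ⟨a2, ha2, hfa2⟩
  rcases Sym2.mem_map.1 h3 with ⟨a3, ha3, hfa3⟩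
  have e12 : a1 = a2 := hf (hfa1.trans hfa2.symm)
  have e13 : a1 = a3 := hf (hfa1.trans hfa3.symm)
  rw [Sym2.mem_iff] at ha1 ha2 ha3
  subst e12; subst e13
  rcases ha1 with rfl | rfl <;> rcases ha3 with h | h <;> simp_all

/-- Transfer along two injections with the same range. -/
lemma transfer_iso {k n : ℕ} {A B : Multiset (Sym2 (Fin k))} {f g : Fin k → Fin n}
    (hf : Function.Injective f) (hg : Function.Injective g)
    (hrange : ∀ x, ∃ y, g y = f x)
    (h : A.map (Sym2.map f) = B.map (Sym2.map g)) :
    ∃ σ : Fin k ≃ Fin k, A.map (Sym2.map σ) = B := by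
  choose σ0 hσ0 using hrange
  have hσ0inj : Function.Injective σ0 := by
    intro x y hxy
    apply hf; rw [← hσ0 x, ← hσ0 y, hxy]
  have hbij := (Finite.injective_iff_bijective).1 hσ0inj
  refine ⟨Equiv.ofBijective σ0 hbij, ?_⟩
  have hcomp : A.map (Sym2.map (g ∘ σ0)) = B.map (Sym2.map g) := by
    rw [show g ∘ σ0 = f from funext hσ0, h]
  have : (A.map (Sym2.map σ0)).map (Sym2.map g) = B.map (Sym2.map g) := by
    rw [Multiset.map_map]
    rw [show (Sym2.map g ∘ Sym2.map σ0) = Sym2.map (g ∘ σ0) from funext fun z => Sym2.map_map z]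
    exact hcomp
  exact Multiset.map_injective (Sym2.map.injective hg) this


def sigma2Equiv {m : Fin 2 → ℕ} : (Σ i : Fin 2, Fin (m i)) ≃ (Fin (m 0) ⊕ Fin (m 1)) where
  toFun p :=
    match p with
    | ⟨⟨0, _⟩, x⟩ => Sum.inl x
    | ⟨⟨1, _⟩, x⟩ => Sum.inr x
  invFun s :=
    match s with
    | Sum.inl x => ⟨0, x⟩
    | Sum.inr x => ⟨1, x⟩
  left_inv := by
    rintro ⟨⟨i, hi⟩, x⟩
    match i, hi, x with
    | 0, _, _ => rfl
    | 1, _, _ => rfl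
  right_inv := by rintro (x | x) <;> rfl

@[simp] lemma sigma2Equiv_zero {m : Fin 2 → ℕ} (x : Fin (m 0)) :
    sigma2Equiv ⟨0, x⟩ = Sum.inl x := rfl

@[simp] lemma sigma2Equiv_one {m : Fin 2 → ℕ} (x : Fin (m 1)) :
    sigma2Equiv ⟨1, x⟩ = Sum.inr x := rfl

lemma sigma2_unionE {m : Fin 2 → ℕ} (Es : ∀ i, Multiset (Sym2 (Fin (m i)))) :
    (unionE Es).map (Sym2.map sigma2Equiv) =
      (Es 0).map (Sym2.map Sum.inl) + (Es 1).map (Sym2.map Sum.inr) := by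
  rw [unionE, Fin.sum_univ_two, Multiset.map_add, Multiset.map_map, Multiset.map_map]
  congr 1
  · apply Multiset.map_congr rfl
    intro z _
    rw [Function.comp_apply, Sym2.map_map]
    rfl
  · apply Multiset.map_congr rfl
    intro z _
    rw [Function.comp_apply, Sym2.map_map]
    rfl

/-- Composing Sym2 multiset maps. -/
lemma map_map_sym2 {α β γ : Type*} (f : α → β) (g : β → γ) (M : Multiset (Sym2 α)) :
    (M.map (Sym2.map f)).map (Sym2.map g) = M.map (Sym2.map (g ∘ f)) := by
  rw [Multiset.map_map]
  exact Multiset.map_congr rfl (fun z _ => Sym2.map_map z)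

def jmap {α : Type*} (p q r t : α) : Fin 4 → α := fun i =>
  match i with
  | ⟨0, _⟩ => p
  | ⟨1, _⟩ => q
  | ⟨2, _⟩ => r
  | ⟨_+3, _⟩ => t

lemma jmap_inj {α : Type*} (p q r t : α) (hpq : p ≠ q) (hpr : p ≠ r) (hpt : p ≠ t)
    (hqr : q ≠ r) (hqt : q ≠ t) (hrt : r ≠ t) : Function.Injective (jmap p q r t) := by
  intro i1 i2 h
  rcases i1 with ⟨k1, hk1⟩; rcases i2 with ⟨k2, hk2⟩
  interval_cases k1 <;> interval_cases k2 <;>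
    first
      | rfl
      | exact absurd h (by assumption)
      | exact absurd h (Ne.symm (by assumption))

lemma mem_of_map_equiv {α β : Type*} (f : α ≃ β) {M : Multiset (Sym2 α)} {x y : α}
    (h : s(f x, f y) ∈ M.map (Sym2.map f)) : s(x, y) ∈ M := by
  rcases Multiset.mem_map.1 h with ⟨w, hw, hww⟩
  have : w = s(x, y) := by
    apply Sym2.map.injective f.injective
    rw [hww, Sym2.map_pair_eq]
  rwa [this] at hw

variable (Gs : ∀ n : ℕ, Multiset (Sym2 (Fin n)))

/-- Merging two paths joined end to end gives a path. -/
lemma path_merge {a b n : ℕ} (ha : 1 ≤ a) (hb : 1 ≤ b) (hab : a + b = n)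
    (M : Multiset (Sym2 (Fin a ⊕ Fin b))) (hMnd : M.Nodup)
    (hM : M = (pathE a).map (Sym2.map Sum.inl) + (pathE b).map (Sym2.map Sum.inr)
      + {s(Sum.inl (⟨a - 1, by omega⟩ : Fin a), Sum.inr (⟨0, hb⟩ : Fin b))}) :
    ∃ E2 : (Fin a ⊕ Fin b) ≃ Fin n, M.map (Sym2.map E2) = pathE n := by
  refine ⟨finSumFinEquiv.trans (finCongr hab), ?_⟩
  set E2 : (Fin a ⊕ Fin b) ≃ Fin n := finSumFinEquiv.trans (finCongr hab) with hE2
  have hvl : ∀ i : Fin a, ((E2 (Sum.inl i)) : ℕ) = (i : ℕ) := by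
    intro i; simp [hE2, finCongr_apply]
  have hvr : ∀ j : Fin b, ((E2 (Sum.inr j)) : ℕ) = a + (j : ℕ) := by
    intro j; simp [hE2, finCongr_apply]
  have hnd2 : (M.map (Sym2.map E2)).Nodup :=
    Multiset.Nodup.map (Sym2.map.injective E2.injective) hMnd
  rw [Multiset.Nodup.ext hnd2 nodup_pathE]
  intro z
  constructor
  · intro hz
    rcases Multiset.mem_map.1 hz with ⟨w, hw, rfl⟩
    rw [hM] at hw
    rcases Multiset.mem_add.1 hw with hw | hw
    · rcases Multiset.mem_add.1 hw with hw | hw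
      · rcases Multiset.mem_map.1 hw with ⟨e, he, rfl⟩
        rcases mem_pathE.1 he with ⟨i, j, hij, rfl⟩
        rw [Sym2.map_pair_eq, Sym2.map_pair_eq]
        exact mem_pathE.2 ⟨E2 (Sum.inl i), E2 (Sum.inl j), by rw [hvl, hvl]; exact hij, rfl⟩
      · rcases Multiset.mem_map.1 hw with ⟨e, he, rfl⟩
        rcases mem_pathE.1 he with ⟨i, j, hij, rfl⟩
        rw [Sym2.map_pair_eq, Sym2.map_pair_eq]
        exact mem_pathE.2 ⟨E2 (Sum.inr i), E2 (Sum.inr j), by rw [hvr, hvr]; omega, rfl⟩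
    · rw [Multiset.mem_singleton] at hw
      subst hw
      rw [Sym2.map_pair_eq]
      refine mem_pathE.2 ⟨_, _, ?_, rfl⟩
      rw [hvl, hvr]
      simp only [Fin.val_mk]
      omega
  · intro hz
    rcases mem_pathE.1 hz with ⟨i, j, hij, rfl⟩
    have hjn := j.isLt
    rw [hM]
    by_cases h1 : (j : ℕ) < a
    · -- edge inside the left path
      refine Multiset.mem_map.2 ⟨Sym2.map Sum.inl s((⟨i, by omega⟩ : Fin a), (⟨j, h1⟩ : Fin a)), ?_, ?_⟩
      · refine Multiset.mem_add.2 (Or.inl (Multiset.mem_add.2 (Or.inl ?_)))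
        exact Multiset.mem_map.2 ⟨_, mem_pathE.2 ⟨⟨i, by omega⟩, ⟨j, h1⟩, by simpa using hij, rfl⟩, rfl⟩
      · rw [Sym2.map_pair_eq, Sym2.map_pair_eq]
        have e1 : E2 (Sum.inl (⟨i, by omega⟩ : Fin a)) = i := Fin.ext (by rw [hvl])
        have e2 : E2 (Sum.inl (⟨j, h1⟩ : Fin a)) = j := Fin.ext (by rw [hvl])
        rw [e1, e2]
    · by_cases h2 : (j : ℕ) = a
      · -- the crossing edge
        refine Multiset.mem_map.2 ⟨_, Multiset.mem_add.2 (Or.inr (Multiset.mem_singleton_self _)), ?_⟩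
        rw [Sym2.map_pair_eq]
        have e1 : E2 (Sum.inl (⟨a - 1, by omega⟩ : Fin a)) = i := Fin.ext (by rw [hvl]; simp only [Fin.val_mk]; omega)
        have e2 : E2 (Sum.inr (⟨0, hb⟩ : Fin b)) = j := Fin.ext (by rw [hvr]; simp only [Fin.val_mk]; omega)
        rw [e1, e2]
      · -- edge inside the right path
        have h3 : a ≤ (i : ℕ) := by omega
        refine Multiset.mem_map.2 ⟨Sym2.map Sum.inr s((⟨(i:ℕ) - a, by omega⟩ : Fin b), (⟨(j:ℕ) - a, by omega⟩ : Fin b)), ?_, ?_⟩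
        · refine Multiset.mem_add.2 (Or.inl (Multiset.mem_add.2 (Or.inr ?_)))
          exact Multiset.mem_map.2 ⟨_, mem_pathE.2 ⟨_, _, by simp; omega, rfl⟩, rfl⟩
        · rw [Sym2.map_pair_eq, Sym2.map_pair_eq]
          have e1 : E2 (Sum.inr (⟨(i:ℕ) - a, by omega⟩ : Fin b)) = i := Fin.ext (by rw [hvr]; simp only [Fin.val_mk]; omega)
          have e2 : E2 (Sum.inr (⟨(j:ℕ) - a, by omega⟩ : Fin b)) = j := Fin.ext (by rw [hvr]; simp only [Fin.val_mk]; omega)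
          rw [e1, e2]

/-- A connected graph all of whose edges contain `c` is the star centred at `c`. -/
lemma star_build {n : ℕ} (hn : 1 ≤ n) (E : Multiset (Sym2 (Fin n))) (hnd : E.Nodup)
    (hdiag : ∀ e ∈ E, ¬ e.IsDiag)
    (hcon : ∀ u v : Fin n, Reach E u v)
    (c : Fin n) (hc : ∀ z ∈ E, c ∈ z) :
    ∃ σ : Fin n ≃ Fin n, E.map (Sym2.map σ) = starE n := by
  have last : Fin n := ⟨n - 1, by omega⟩
  set lst : Fin n := ⟨n - 1, by omega⟩ with hlst
  have hmem : ∀ z, z ∈ E ↔ ∃ x, x ≠ c ∧ z = s(x, c) := by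
    intro z
    constructor
    · intro hz
      induction z using Sym2.inductionOn with
      | hf u v =>
        have hne : u ≠ v := by
          intro h; exact hdiag _ hz (by simp [h])
        rcases Sym2.mem_iff.1 (hc _ hz) with rfl | rfl
        · exact ⟨v, fun h => hne h.symm, Sym2.eq_swap.symm⟩
        · exact ⟨u, hne, rfl⟩
    · rintro ⟨x, hx, rfl⟩
      obtain ⟨w, hw⟩ := reach_exists_edge (hcon x c) hx
      rcases Sym2.mem_iff.1 (hc _ hw) with rfl | rfl
      · exact absurd rfl hx
      · exact hw
  set σ : Fin n ≃ Fin n := Equiv.swap c lst with hσ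
  have hσc : σ c = lst := Equiv.swap_apply_left c lst
  refine ⟨σ, ?_⟩
  have hndm : (E.map (Sym2.map σ)).Nodup :=
    Multiset.Nodup.map (Sym2.map.injective σ.injective) hnd
  rw [Multiset.Nodup.ext hndm nodup_starE]
  intro z
  constructor
  · intro hz
    rcases Multiset.mem_map.1 hz with ⟨w, hw, rfl⟩
    rcases (hmem w).1 hw with ⟨x, hx, rfl⟩
    rw [Sym2.map_pair_eq, hσc]
    have hσx : σ x ≠ lst := by
      rw [← hσc]; exact fun h => hx (σ.injective h)
    refine mem_starE.2 ⟨σ x, lst, ?_, ?_, rfl⟩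
    · have := (σ x).isLt
      have : ((σ x) : ℕ) ≠ n - 1 := fun h => hσx (Fin.ext h)
      omega
    · simp [hlst]; omega
  · intro hz
    rcases mem_starE.1 hz with ⟨i, j, hi, hj, rfl⟩
    have hjl : j = lst := by apply Fin.ext; simp [hlst]; omega
    subst hjl
    have hil : i ≠ lst := by
      intro h; rw [h] at hi; simp [hlst] at hi; omega
    refine Multiset.mem_map.2 ⟨s(σ.symm i, c), ?_, ?_⟩
    · refine (hmem _).2 ⟨σ.symm i, ?_, rfl⟩
      intro h
      apply hil
      rw [← hσc, ← h]; simp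
    · rw [Sym2.map_pair_eq, hσc]
      congr 1
      simp

/-- Four distinct elements cannot live in `Fin n` for `n ≤ 3`. -/
lemma four_distinct {n : ℕ} (hn : n ≤ 3) (a b c d : Fin n)
    (hab : a ≠ b) (hac : a ≠ c) (had : a ≠ d) (hbc : b ≠ c) (hbd : b ≠ d) (hcd : c ≠ d) :
    False := by
  have h4 : ({a, b, c, d} : Finset (Fin n)).card = 4 := by
    rw [Finset.card_insert_of_notMem (by simp [hab, hac, had]),
      Finset.card_insert_of_notMem (by simp [hbc, hbd]),
      Finset.card_insert_of_notMem (by simp [hcd]), Finset.card_singleton]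
  have h5 := Finset.card_le_univ ({a, b, c, d} : Finset (Fin n))
  rw [h4] at h5
  simp at h5
  omega

section NeatAux
variable (Gs : ∀ n : ℕ, Multiset (Sym2 (Fin n)))

def HS : Prop := ∀ n, 1 ≤ n → (Gs n).Nodup ∧ ∀ e ∈ Gs n, ¬ e.IsDiag

def HC : Prop := ∀ n, 1 ≤ n → ∀ u v : Fin n,
  Relation.ReflTransGen (fun x y : Fin n => s(x, y) ∈ Gs n) u v

def HN : Prop := ∀ n, 1 ≤ n → ∀ S ≤ Gs n, ∃ l : List ℕ,
  l.Pairwise (· ≥ ·) ∧ (∀ x ∈ l, 0 < x) ∧ l.sum = n ∧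
  ∃ φ : Fin n ≃ (Σ i : Fin l.length, Fin (l.get i)),
    (Gs n - S).map (Sym2.map φ) =
      unionE (m := fun i : Fin l.length => l.get i) (fun i => Gs (l.get i))

lemma G_one (hS : HS Gs) : Gs 1 = 0 := by
  rw [Multiset.eq_zero_iff_forall_notMem]
  intro z hz
  induction z using Sym2.inductionOn with
  | hf u v =>
    apply (hS 1 le_rfl).2 _ hz
    have : u = v := Subsingleton.elim u v
    simp [this]

lemma G_two (hS : HS Gs) (hC : HC Gs) : Gs 2 = pathE 2 := by
  rw [pathE_two]
  rw [Multiset.Nodup.ext (hS 2 (by omega)).1 (by simp)]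
  intro z
  constructor
  · intro hz
    induction z using Sym2.inductionOn with
    | hf u v =>
      have hne : u ≠ v := fun h => (hS 2 (by omega)).2 _ hz (by simp [h])
      rw [Multiset.mem_singleton]
      fin_cases u <;> fin_cases v <;> simp_all
  · intro hz
    rw [Multiset.mem_singleton] at hz
    subst hz
    have h01 : (0 : Fin 2) ≠ 1 := by decide
    obtain ⟨w, hw⟩ := reach_exists_edge (hC 2 (by omega) 0 1 : Reach (Gs 2) 0 1) h01
    have hw0 : w ≠ 0 := fun h => (hS 2 (by omega)).2 _ hw (by simp [h])
    have : w = 1 := by omega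
    rwa [this] at hw

lemma extract (hC : HC Gs) (hN : HN Gs) {n : ℕ} (hn : 1 ≤ n)
    {F : Multiset (Sym2 (Fin n))} (hF : F ≤ Gs n)
    (C : Finset (Fin n)) (c₀ : Fin n) (hc₀ : c₀ ∈ C)
    (hedge : ∀ x y : Fin n, s(x, y) ∈ F → x ∈ C ∧ y ∈ C)
    (hreach : ∀ c ∈ C, Reach F c₀ c) :
    ∃ (k : ℕ) (ψ : Fin k → Fin n), k = C.card ∧ Function.Injective ψ ∧
      (∀ x, ψ x ∈ C) ∧ (∀ y ∈ C, ∃ x, ψ x = y) ∧ (Gs k).map (Sym2.map ψ) = F := by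
  obtain ⟨l, _, hpos, hsum, φ, hφ⟩ := hN n hn (Gs n - F) tsub_le_self
  rw [tsub_tsub_cancel_of_le hF] at hφ
  set i := (φ c₀).1 with hi
  have hposi : ∀ j : Fin l.length, 0 < l.get j := fun j => hpos _ (l.get_mem j)
  -- reachability characterisation
  have keyf : ∀ z, Reach F c₀ z → (φ z).1 = i := by
    intro z hz
    exact (reach_unionE_fst ((reach_transfer φ hφ).1 hz)).symm
  have keyb : ∀ z, (φ z).1 = i → Reach F c₀ z := by
    intro z hz
    apply (reach_transfer φ hφ).2
    rcases hzz : φ z with ⟨iz, xz⟩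
    rw [hzz] at hz; simp at hz
    subst hz
    have h0 : Reach (Gs (l.get i)) (φ c₀).2 xz := by
      have := hC (l.get i) (hposi i) (φ c₀).2 xz
      exact this
    have := reach_unionE_of_reach (Es := fun j => Gs (l.get j)) h0
    rwa [show (⟨i, (φ c₀).2⟩ : Σ j : Fin l.length, Fin (l.get j)) = φ c₀ from rfl] at this
  have hclosed : ∀ z, Reach F c₀ z → z ∈ C := by
    intro z hz
    induction hz with
    | refl => exact hc₀
    | tail _ hbc ih => exact (hedge _ _ hbc).2
  have hCeq : ∀ z, z ∈ C ↔ (φ z).1 = i := by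
    intro z
    exact ⟨fun h => keyf z (hreach z h), fun h => hclosed z (keyb z h)⟩
  set ψ : Fin (l.get i) → Fin n := fun x => φ.symm ⟨i, x⟩ with hψ
  have hψinj : Function.Injective ψ := by
    intro x y h
    have := congrArg φ h
    simp only [hψ, Equiv.apply_symm_apply] at this
    exact eq_of_heq (Sigma.mk.inj_iff.1 this).2
  have hψmem : ∀ x, ψ x ∈ C := by
    intro x
    rw [hCeq]
    simp only [hψ]
    rw [Equiv.apply_symm_apply]
  have hψonto : ∀ y ∈ C, ∃ x, ψ x = y := by
    intro y hy
    have h1 : (φ y).1 = i := (hCeq y).1 hy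
    rcases hzz : φ y with ⟨iy, xy⟩
    rw [hzz] at h1; simp at h1
    subst h1
    exact ⟨xy, by rw [hψ]; simp [← hzz]⟩
  have hcard : l.get i = C.card := by
    have himg : C = Finset.image ψ Finset.univ := by
      ext z
      simp only [Finset.mem_image, Finset.mem_univ, true_and]
      exact ⟨fun h => hψonto z h, fun ⟨x, hx⟩ => hx ▸ hψmem x⟩
    rw [himg, Finset.card_image_of_injective _ hψinj]
    simp
  -- other blocks are empty
  have hzero : ∀ j : Fin l.length, j ≠ i →
      (Gs (l.get j)).map (Sym2.map (fun v => (⟨j, v⟩ : Σ j : Fin l.length, Fin (l.get j)))) = 0 := by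
    intro j hj
    by_contra h0
    obtain ⟨z, hz⟩ := Multiset.exists_mem_of_ne_zero h0
    have hzu : z ∈ unionE (m := fun i : Fin l.length => l.get i) (fun i => Gs (l.get i)) := by
      rw [unionE, Multiset.mem_sum]
      exact ⟨j, Finset.mem_univ _, hz⟩
    rw [← hφ] at hzu
    rcases Multiset.mem_map.1 hzu with ⟨e, he, rfl⟩
    induction e using Sym2.inductionOn with
    | hf x y =>
      have hx : x ∈ C := (hedge x y he).1
      have hfst : (φ x).1 = i := (hCeq x).1 hx
      rcases Multiset.mem_map.1 hz with ⟨e', he', hee⟩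
      have hφx : φ x ∈ Sym2.map (fun v => (⟨j, v⟩ : Σ j : Fin l.length, Fin (l.get j))) e' := by
        rw [hee, Sym2.map_pair_eq]
        simp
      rcases Sym2.mem_map.1 hφx with ⟨a, _, ha⟩
      rw [← ha] at hfst
      exact hj (by simpa using hfst.symm ▸ rfl)
  have huni : unionE (m := fun i : Fin l.length => l.get i) (fun i => Gs (l.get i)) =
      (Gs (l.get i)).map (Sym2.map (fun v => (⟨i, v⟩ : Σ j : Fin l.length, Fin (l.get j)))) := by
    rw [unionE]
    exact Finset.sum_eq_single_of_mem i (Finset.mem_univ _) (fun j _ hj => hzero j hj)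
  have hedges : (Gs (l.get i)).map (Sym2.map ψ) = F := by
    have h1 : F.map (Sym2.map φ) =
        (Gs (l.get i)).map (Sym2.map (fun v => (⟨i, v⟩ : Σ j : Fin l.length, Fin (l.get j)))) := by
      rw [hφ, huni]
    have h2 := congrArg (Multiset.map (Sym2.map ⇑φ.symm)) h1
    rw [map_symm_cancel] at h2
    rw [h2, Multiset.map_map]
    apply Multiset.map_congr rfl
    intro z _
    rw [Function.comp_apply, Sym2.map_map]
    rfl
  exact ⟨l.get i, ψ, hcard, hψinj, hψmem, hψonto, hedges⟩


lemma decomp (hS : HS Gs) (hC : HC Gs) (hN : HN Gs) {n : ℕ} (hn : 2 ≤ n) :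
    ∃ a b : ℕ, 1 ≤ a ∧ 1 ≤ b ∧ a + b = n ∧
      ∃ (ψ : Fin n ≃ (Fin a ⊕ Fin b)) (u : Fin a) (v : Fin b),
        (Gs n).map (Sym2.map ψ) =
          (Gs a).map (Sym2.map Sum.inl) + (Gs b).map (Sym2.map Sum.inr)
            + {s(Sum.inl u, Sum.inr v)} := by
  have hn1 : 1 ≤ n := by omega
  -- find an edge
  have h01 : (⟨0, by omega⟩ : Fin n) ≠ ⟨1, by omega⟩ := by
    intro h; have := congrArg Fin.val h; simp at this
  obtain ⟨y, he⟩ := reach_exists_edge (hC n hn1 ⟨0, by omega⟩ ⟨1, by omega⟩) h01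
  set x : Fin n := ⟨0, by omega⟩ with hx
  have hxy : x ≠ y := by
    intro h
    exact (hS n hn1).2 _ he (by simp [h])
  obtain ⟨l, _, hpos, hsum, φ, hφ⟩ := hN n hn1 {s(x, y)} (Multiset.singleton_le.2 he)
  have hposi : ∀ j : Fin l.length, 0 < l.get j := fun j => hpos _ (l.get_mem j)
  set G' : Multiset (Sym2 (Fin n)) := Gs n - {s(x, y)} with hG'
  have keyf : ∀ z w, Reach G' z w → (φ z).1 = (φ w).1 := by
    intro z w hz
    exact reach_unionE_fst ((reach_transfer φ hφ).1 hz)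
  have keyb : ∀ z w, (φ z).1 = (φ w).1 → Reach G' z w := by
    intro z w hzw
    apply (reach_transfer φ hφ).2
    rcases hzz : φ z with ⟨iz, xz⟩
    rcases hww : φ w with ⟨iw, xw⟩
    rw [hzz, hww] at hzw; simp at hzw
    subst hzw
    exact reach_unionE_of_reach (Es := fun j => Gs (l.get j)) (hC (l.get iz) (hposi iz) xz xw)
  -- every vertex reaches x or y after deletion
  have hall : ∀ z, (φ z).1 = (φ x).1 ∨ (φ z).1 = (φ y).1 := by
    intro z
    rcases bridge (E := Gs n) (y := y) (hC n hn1 z x : Reach (Gs n) z x) with h | h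
    · exact Or.inl (keyf _ _ (by rw [hG']; exact h))
    · exact Or.inr (keyf _ _ (by rw [hG']; exact h))
  -- x and y are in different blocks
  have hdiff : (φ x).1 ≠ (φ y).1 := by
    intro hsame
    -- then there is only one block
    have hone : ∀ j : Fin l.length, j = (φ x).1 := by
      intro j
      have hfix := congrArg Sigma.fst (φ.apply_symm_apply ⟨j, ⟨0, hposi j⟩⟩)
      rcases hall (φ.symm ⟨j, ⟨0, hposi j⟩⟩) with h | h
      · exact hfix.symm.trans h
      · exact ((hfix.symm.trans h).trans hsame.symm : _)
    have huniv : (Finset.univ : Finset (Fin l.length)) = {(φ x).1} := by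
      apply Finset.eq_singleton_iff_unique_mem.2
      exact ⟨Finset.mem_univ _, fun j _ => hone j⟩
    have hunione : unionE (m := fun i : Fin l.length => l.get i) (fun i => Gs (l.get i)) =
        (Gs (l.get (φ x).1)).map (Sym2.map (fun v => (⟨(φ x).1, v⟩ : Σ j : Fin l.length, Fin (l.get j)))) := by
      rw [unionE, huniv, Finset.sum_singleton]
    -- cardinality contradiction
    have hlen1 : l.length = 1 := by
      have hcard1 := congrArg Finset.card huniv
      rw [Finset.card_univ, Fintype.card_fin, Finset.card_singleton] at hcard1
      exact hcard1
    obtain ⟨c, rfl⟩ := List.length_eq_one_iff.1 hlen1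
    have hcn : c = n := by simpa using hsum
    have hget : [c].get (φ x).1 = c := by simp
    have hcard := congrArg Multiset.card hφ
    rw [Multiset.card_map, hunione, Multiset.card_map, hget, hcn] at hcard
    have hsub : Multiset.card (Gs n - {s(x,y)}) = Multiset.card (Gs n) - 1 := by
      rw [Multiset.card_sub (Multiset.singleton_le.2 he)]
      simp
    rw [hsub] at hcard
    have hpos' : 0 < Multiset.card (Gs n) := Multiset.card_pos.2 (fun h0 => by simp [h0] at he)
    omega
  -- exactly two blocks
  have htwo : ∀ j : Fin l.length, j = (φ x).1 ∨ j = (φ y).1 := by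
    intro j
    have hfix := congrArg Sigma.fst (φ.apply_symm_apply ⟨j, ⟨0, hposi j⟩⟩)
    rcases hall (φ.symm ⟨j, ⟨0, hposi j⟩⟩) with h | h
    · exact Or.inl (hfix.symm.trans h)
    · exact Or.inr (hfix.symm.trans h)
  have hlen2 : l.length = 2 := by
    have huniv : (Finset.univ : Finset (Fin l.length)) = {(φ x).1, (φ y).1} := by
      apply Finset.Subset.antisymm
      · intro j _
        rcases htwo j with h | h <;> simp [h]
      · intro j _; exact Finset.mem_univ _
    have hcard := congrArg Finset.card huniv
    rw [Finset.card_univ, Fintype.card_fin, Finset.card_insert_of_notMem (by simpa using hdiff),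
      Finset.card_singleton] at hcard
    exact hcard
  obtain ⟨a, b, rfl⟩ := List.length_eq_two.1 hlen2
  have ha : 1 ≤ a := hpos a (by simp)
  have hb : 1 ≤ b := hpos b (by simp)
  have hab : a + b = n := by simpa using hsum
  -- repackage over Fin 2
  set m : Fin 2 → ℕ := fun i => [a, b].get i with hm
  let φ' : Fin n ≃ (Σ i : Fin 2, Fin (m i)) := φ
  have hφ' : (G').map (Sym2.map φ') = unionE (m := m) (fun i => Gs (m i)) := hφ
  set ψ : Fin n ≃ (Fin a ⊕ Fin b) := φ'.trans (sigma2Equiv (m := m)) with hψdef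
  have hGsplit : Gs n = G' + {s(x, y)} := by
    rw [hG', tsub_add_cancel_of_le (Multiset.singleton_le.2 he)]
  have hmain : (G').map (Sym2.map ψ) =
      (Gs a).map (Sym2.map Sum.inl) + (Gs b).map (Sym2.map Sum.inr) := by
    have h1 : (G').map (Sym2.map ψ) = ((G').map (Sym2.map φ')).map (Sym2.map (sigma2Equiv (m := m))) := by
      rw [Multiset.map_map]
      apply Multiset.map_congr rfl
      intro z _
      rw [Function.comp_apply, Sym2.map_map]
      rfl
    rw [h1, hφ', sigma2_unionE]
    rfl
  -- the crossing edge
  have hcross : ∃ (u : Fin a) (v : Fin b), Sym2.map ψ s(x, y) = s(Sum.inl u, Sum.inr v) := by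
    rcases hxx : φ' x with ⟨ix, px⟩
    rcases hyy : φ' y with ⟨iy, py⟩
    have hne : ix ≠ iy := by
      intro h
      apply hdiff
      have e1 : (φ' x).1 = ix := by rw [hxx]
      have e2 : (φ' y).1 = iy := by rw [hyy]
      exact (e1.trans h).trans e2.symm
    rw [Sym2.map_pair_eq]
    have hψx : ψ x = sigma2Equiv (m := m) ⟨ix, px⟩ := by rw [hψdef, Equiv.trans_apply]; rw [show φ' x = ⟨ix, px⟩ from hxx]
    have hψy : ψ y = sigma2Equiv (m := m) ⟨iy, py⟩ := by rw [hψdef, Equiv.trans_apply]; rw [show φ' y = ⟨iy, py⟩ from hyy]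
    match ix, iy, hne, px, py with
    | ⟨0, _⟩, ⟨1, _⟩, _, px, py =>
      exact ⟨px, py, by rw [hψx, hψy]; rfl⟩
    | ⟨1, _⟩, ⟨0, _⟩, _, px, py =>
      refine ⟨py, px, ?_⟩
      rw [hψx, hψy]
      exact Sym2.eq_swap
    | ⟨0, _⟩, ⟨0, _⟩, hne, _, _ => exact absurd rfl hne
    | ⟨1, _⟩, ⟨1, _⟩, hne, _, _ => exact absurd rfl hne
  obtain ⟨u, v, huv⟩ := hcross
  refine ⟨a, b, ha, hb, hab, ψ, u, v, ?_⟩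
  rw [hGsplit, Multiset.map_add, hmain, Multiset.map_singleton, huv]

/-- Transport a decomposition through isomorphisms of the two parts. -/
lemma theta_eq {n a b : ℕ} {ψ : Fin n ≃ (Fin a ⊕ Fin b)} {u : Fin a} {v : Fin b}
    (hψ : (Gs n).map (Sym2.map ψ) =
      (Gs a).map (Sym2.map Sum.inl) + (Gs b).map (Sym2.map Sum.inr) + {s(Sum.inl u, Sum.inr v)})
    (σa : Fin a ≃ Fin a) (σb : Fin b ≃ Fin b)
    {A : Multiset (Sym2 (Fin a))} {B : Multiset (Sym2 (Fin b))}
    (hA : (Gs a).map (Sym2.map σa) = A) (hB : (Gs b).map (Sym2.map σb) = B) :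
    (Gs n).map (Sym2.map (ψ.trans (Equiv.sumCongr σa σb))) =
      A.map (Sym2.map Sum.inl) + B.map (Sym2.map Sum.inr)
        + {s(Sum.inl (σa u), Sum.inr (σb v))} := by
  rw [Equiv.coe_trans, ← map_map_sym2, hψ, Multiset.map_add, Multiset.map_add,
    Multiset.map_singleton, Sym2.map_pair_eq, map_map_sym2, map_map_sym2]
  have e1 : (⇑(Equiv.sumCongr σa σb) ∘ Sum.inl) = ((Sum.inl ∘ ⇑σa) : Fin a → Fin a ⊕ Fin b) := by
    funext x; simp
  have e2 : (⇑(Equiv.sumCongr σa σb) ∘ Sum.inr) = ((Sum.inr ∘ ⇑σb) : Fin b → Fin a ⊕ Fin b) := by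
    funext x; simp
  have e3 : (Equiv.sumCongr σa σb) (Sum.inl u) = Sum.inl (σa u) := by simp
  have e4 : (Equiv.sumCongr σa σb) (Sum.inr v) = Sum.inr (σb v) := by simp
  rw [e1, e2, e3, e4, ← map_map_sym2, ← map_map_sym2, hA, hB]

/-- Swap the two parts of a decomposition. -/
lemma swap_decomp {n a b : ℕ} {ψ : Fin n ≃ (Fin a ⊕ Fin b)} {u : Fin a} {v : Fin b}
    {A : Multiset (Sym2 (Fin a))} {B : Multiset (Sym2 (Fin b))}
    (hψ : (Gs n).map (Sym2.map ψ) =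
      A.map (Sym2.map Sum.inl) + B.map (Sym2.map Sum.inr) + {s(Sum.inl u, Sum.inr v)}) :
    (Gs n).map (Sym2.map (ψ.trans (Equiv.sumComm (Fin a) (Fin b)))) =
      B.map (Sym2.map Sum.inl) + A.map (Sym2.map Sum.inr) + {s(Sum.inl v, Sum.inr u)} := by
  rw [Equiv.coe_trans, ← map_map_sym2, hψ, Multiset.map_add, Multiset.map_add,
    Multiset.map_singleton, Sym2.map_pair_eq, map_map_sym2, map_map_sym2]
  have e1 : (⇑(Equiv.sumComm (Fin a) (Fin b)) ∘ Sum.inl) = ((Sum.inr : Fin a → Fin b ⊕ Fin a)) := by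
    funext x; simp
  have e2 : (⇑(Equiv.sumComm (Fin a) (Fin b)) ∘ Sum.inr) = ((Sum.inl : Fin b → Fin b ⊕ Fin a)) := by
    funext x; simp
  have e3 : s((Equiv.sumComm (Fin a) (Fin b)) (Sum.inl u), (Equiv.sumComm (Fin a) (Fin b)) (Sum.inr v))
      = s(Sum.inl v, Sum.inr u) := by
    simp
  rw [e1, e2, e3]
  abel


/-- A 4-vertex configuration lemma: three edges on four distinct vertices forming
a connected graph `B`-shaped pattern pull back to an isomorphism of `Gs 4`. -/
lemma four_iso (hS : HS Gs) (hC : HC Gs) (hN : HN Gs) {n : ℕ} (hn : 1 ≤ n)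
    (p q r t : Fin n) (hpq : p ≠ q) (hpr : p ≠ r) (hpt : p ≠ t)
    (hqr : q ≠ r) (hqt : q ≠ t) (hrt : r ≠ t)
    (e1 e2 e3 : Sym2 (Fin n)) (he1 : e1 ∈ Gs n) (he2 : e2 ∈ Gs n) (he3 : e3 ∈ Gs n)
    (hne12 : e1 ≠ e2) (hne13 : e1 ≠ e3) (hne23 : e2 ≠ e3)
    (B : Multiset (Sym2 (Fin 4)))
    (hB : B.map (Sym2.map (jmap p q r t)) = {e1, e2, e3})
    (hedge : ∀ x y : Fin n, s(x, y) ∈ ({e1, e2, e3} : Multiset (Sym2 (Fin n))) →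
      (x = p ∨ x = q ∨ x = r ∨ x = t) ∧ (y = p ∨ y = q ∨ y = r ∨ y = t))
    (hreach : ∀ c : Fin n, (c = p ∨ c = q ∨ c = r ∨ c = t) →
      Reach ({e1, e2, e3} : Multiset (Sym2 (Fin n))) q c) :
    ∃ σ : Fin 4 ≃ Fin 4, (Gs 4).map (Sym2.map σ) = B := by
  set j : Fin 4 → Fin n := jmap p q r t with hj
  have hjinj : Function.Injective j := jmap_inj p q r t hpq hpr hpt hqr hqt hrt
  set F : Multiset (Sym2 (Fin n)) := {e1, e2, e3} with hF
  have hFnd : F.Nodup := by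
    simp [hF, Multiset.nodup_cons, hne12, hne13, hne23]
  have hFle : F ≤ Gs n := by
    rw [Multiset.le_iff_subset hFnd]
    intro z hz
    simp [hF] at hz
    rcases hz with rfl | rfl | rfl <;> assumption
  set C : Finset (Fin n) := {p, q, r, t} with hCdef
  have hmemC : ∀ w : Fin n, w ∈ C ↔ (w = p ∨ w = q ∨ w = r ∨ w = t) := by
    intro w; simp [hCdef]
  have hcard : C.card = 4 := by
    rw [hCdef]
    rw [Finset.card_insert_of_notMem (by simp [hpq, hpr, hpt]),
      Finset.card_insert_of_notMem (by simp [hqr, hqt]),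
      Finset.card_insert_of_notMem (by simp [hrt]), Finset.card_singleton]
  obtain ⟨k, ψ, hk, hψinj, hψmem, hψonto, hψF⟩ :=
    extract Gs hC hN hn hFle C q (by rw [hmemC]; tauto)
      (fun x y h => by rw [hmemC, hmemC]; exact hedge x y h)
      (fun c hc => hreach c ((hmemC c).1 hc))
  rw [hcard] at hk
  subst hk
  have hrange : ∀ x, ∃ i, j i = ψ x := by
    intro x
    rcases (hmemC _).1 (hψmem x) with h | h | h | h
    · exact ⟨0, by rw [h]; exact rfl⟩
    · exact ⟨1, by rw [h]; exact rfl⟩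
    · exact ⟨2, by rw [h]; exact rfl⟩
    · exact ⟨3, by rw [h]; exact rfl⟩
  exact transfer_iso hψinj hjinj hrange (by rw [hψF, hB])


/-- `K_{1,3}` configurations force `Gs 4` to be a star. -/
lemma k13_star (hS : HS Gs) (hC : HC Gs) (hN : HN Gs) {n : ℕ} (hn : 1 ≤ n)
    (c x y z : Fin n) (hxy : x ≠ y) (hxz : x ≠ z) (hyz : y ≠ z)
    (hcx : c ≠ x) (hcy : c ≠ y) (hcz : c ≠ z)
    (hex : s(x, c) ∈ Gs n) (hey : s(y, c) ∈ Gs n) (hez : s(z, c) ∈ Gs n) :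
    ∃ σ : Fin 4 ≃ Fin 4, (Gs 4).map (Sym2.map σ) = starE 4 := by
  have hne12 : s(x, c) ≠ s(y, c) := by
    intro h
    rcases Sym2.eq_iff.1 h with ⟨h1, h2⟩ | ⟨h1, h2⟩ <;> simp_all
  have hne13 : s(x, c) ≠ s(z, c) := by
    intro h
    rcases Sym2.eq_iff.1 h with ⟨h1, h2⟩ | ⟨h1, h2⟩ <;> simp_all
  have hne23 : s(y, c) ≠ s(z, c) := by
    intro h
    rcases Sym2.eq_iff.1 h with ⟨h1, h2⟩ | ⟨h1, h2⟩ <;> simp_all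
  apply four_iso Gs hS hC hN hn x y z c (hxy) (hxz) (fun h => hcx h.symm)
    (hyz) (fun h => hcy h.symm) (fun h => hcz h.symm)
    s(x, c) s(y, c) s(z, c) hex hey hez hne12 hne13 hne23
  · rw [starE_four]
    rfl
  · intro a b hab
    simp only [Multiset.insert_eq_cons, Multiset.mem_cons, Multiset.mem_singleton] at hab
    rcases hab with h | h | h <;> rcases Sym2.eq_iff.1 h with ⟨rfl, rfl⟩ | ⟨rfl, rfl⟩ <;> tauto
  · intro w hw
    have hyc : Reach ({s(x,c), s(y,c), s(z,c)} : Multiset (Sym2 (Fin n))) y c :=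
      Relation.ReflTransGen.single (by simp)
    have hstep : ∀ w', s(c, w') ∈ ({s(x,c), s(y,c), s(z,c)} : Multiset (Sym2 (Fin n))) →
        Reach ({s(x,c), s(y,c), s(z,c)} : Multiset (Sym2 (Fin n))) y w' :=
      fun w' hw' => hyc.tail hw'
    rcases hw with rfl | rfl | rfl | rfl
    · exact hstep _ (by rw [Sym2.eq_swap]; simp)
    · exact Relation.ReflTransGen.refl
    · exact hstep _ (by rw [Sym2.eq_swap]; simp)
    · exact hyc

/-- `P_4` configurations force `Gs 4` to be a path. -/
lemma p4_path (hS : HS Gs) (hC : HC Gs) (hN : HN Gs) {n : ℕ} (hn : 1 ≤ n)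
    (p q r t : Fin n) (hpq : p ≠ q) (hpr : p ≠ r) (hpt : p ≠ t)
    (hqr : q ≠ r) (hqt : q ≠ t) (hrt : r ≠ t)
    (he1 : s(p, q) ∈ Gs n) (he2 : s(q, r) ∈ Gs n) (he3 : s(r, t) ∈ Gs n) :
    ∃ σ : Fin 4 ≃ Fin 4, (Gs 4).map (Sym2.map σ) = pathE 4 := by
  have hne12 : s(p, q) ≠ s(q, r) := by
    intro h
    rcases Sym2.eq_iff.1 h with ⟨h1, h2⟩ | ⟨h1, h2⟩ <;> simp_all
  have hne13 : s(p, q) ≠ s(r, t) := by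
    intro h
    rcases Sym2.eq_iff.1 h with ⟨h1, h2⟩ | ⟨h1, h2⟩ <;> simp_all
  have hne23 : s(q, r) ≠ s(r, t) := by
    intro h
    rcases Sym2.eq_iff.1 h with ⟨h1, h2⟩ | ⟨h1, h2⟩ <;> simp_all
  apply four_iso Gs hS hC hN hn p q r t hpq hpr hpt hqr hqt hrt
    s(p, q) s(q, r) s(r, t) he1 he2 he3 hne12 hne13 hne23
  · rw [pathE_four]
    rfl
  · intro a b hab
    simp only [Multiset.insert_eq_cons, Multiset.mem_cons, Multiset.mem_singleton] at hab
    rcases hab with h | h | h <;> rcases Sym2.eq_iff.1 h with ⟨rfl, rfl⟩ | ⟨rfl, rfl⟩ <;> tauto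
  · intro w hw
    have h1 : Reach ({s(p,q), s(q,r), s(r,t)} : Multiset (Sym2 (Fin n))) q p :=
      Relation.ReflTransGen.single (by rw [Sym2.eq_swap]; simp)
    have h2 : Reach ({s(p,q), s(q,r), s(r,t)} : Multiset (Sym2 (Fin n))) q r :=
      Relation.ReflTransGen.single (by simp)
    rcases hw with rfl | rfl | rfl | rfl
    · exact h1
    · exact Relation.ReflTransGen.refl
    · exact h2
    · exact h2.tail (by simp)

/-- `Gs 4` cannot be both a path and a star. -/
lemma iso_contra
    (hP : ∃ σ : Fin 4 ≃ Fin 4, (Gs 4).map (Sym2.map σ) = pathE 4)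
    (hStar : ∃ σ : Fin 4 ≃ Fin 4, (Gs 4).map (Sym2.map σ) = starE 4) : False := by
  obtain ⟨σP, hσP⟩ := hP
  obtain ⟨σS, hσS⟩ := hStar
  have h1 : Gs 4 = (pathE 4).map (Sym2.map σP.symm) := by
    rw [← hσP, map_symm_cancel]
  rw [h1, map_map_sym2] at hσS
  exact no_iso_path_star _ (Function.Injective.comp σS.injective σP.symm.injective) hσS

/-- One induction step in the path case. -/
lemma path_step (hS : HS Gs) (hC : HC Gs) (hN : HN Gs) {n : ℕ} (h2 : 2 ≤ n)
    (IH : ∀ k, 1 ≤ k → k < n → ∃ σ : Fin k ≃ Fin k, (Gs k).map (Sym2.map σ) = pathE k) :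
    (∃ σ : Fin n ≃ Fin n, (Gs n).map (Sym2.map σ) = pathE n) ∨
    (∃ c x y z : Fin n, x ≠ y ∧ x ≠ z ∧ y ≠ z ∧ c ≠ x ∧ c ≠ y ∧ c ≠ z ∧
      s(x, c) ∈ Gs n ∧ s(y, c) ∈ Gs n ∧ s(z, c) ∈ Gs n) := by
  obtain ⟨a, b, ha, hb, hab, ψ, u, v, hψ⟩ := decomp Gs hS hC hN h2
  obtain ⟨σa, hσa⟩ := IH a ha (by omega)
  obtain ⟨σb, hσb⟩ := IH b hb (by omega)
  -- normalisation of the left endpoint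
  have HA : (∃ σA : Fin a ≃ Fin a, (Gs a).map (Sym2.map σA) = pathE a ∧ ((σA u : ℕ) = a - 1)) ∨
      (0 < ((σa u) : ℕ) ∧ ((σa u) : ℕ) < a - 1) := by
    rcases Nat.lt_trichotomy ((σa u : ℕ)) (a - 1) with h | h | h
    · rcases Nat.eq_zero_or_pos ((σa u : ℕ)) with h0 | h0
      · left
        refine ⟨σa.trans Fin.revPerm, ?_, ?_⟩
        · rw [Equiv.coe_trans, ← map_map_sym2, hσa]
          have : ⇑(Fin.revPerm (n := a)) = (fun i : Fin a => i.rev) := by funext i; simp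
          rw [this, pathE_map_rev]
        · rw [Equiv.trans_apply]
          simp [Fin.val_rev]
          omega
      · right; exact ⟨h0, h⟩
    · left; exact ⟨σa, hσa, h⟩
    · have := (σa u).isLt; omega
  -- normalisation of the right endpoint
  have HB : (∃ σB : Fin b ≃ Fin b, (Gs b).map (Sym2.map σB) = pathE b ∧ ((σB v : ℕ) = 0)) ∨
      (0 < ((σb v) : ℕ) ∧ ((σb v) : ℕ) < b - 1) := by
    rcases Nat.eq_zero_or_pos ((σb v : ℕ)) with h0 | h0
    · left; exact ⟨σb, hσb, h0⟩
    · rcases Nat.lt_trichotomy ((σb v : ℕ)) (b - 1) with h | h | h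
      · right; exact ⟨h0, h⟩
      · left
        refine ⟨σb.trans Fin.revPerm, ?_, ?_⟩
        · rw [Equiv.coe_trans, ← map_map_sym2, hσb]
          have : ⇑(Fin.revPerm (n := b)) = (fun i : Fin b => i.rev) := by funext i; simp
          rw [this, pathE_map_rev]
        · rw [Equiv.trans_apply]
          simp [Fin.val_rev]
          omega
      · have := (σb v).isLt; omega
  -- helper to pull edges back to `Gs n`
  rcases HA with ⟨σA, hσA, huA⟩ | hmidA
  · rcases HB with ⟨σB, hσB, hvB⟩ | hmidB
    · -- both endpoints: merge into a path
      left
      set θ : Fin n ≃ (Fin a ⊕ Fin b) := ψ.trans (Equiv.sumCongr σA σB) with hθdef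
      have hθ := theta_eq Gs hψ σA σB hσA hσB
      have hu' : σA u = (⟨a - 1, by omega⟩ : Fin a) := Fin.ext huA
      have hv' : σB v = (⟨0, hb⟩ : Fin b) := Fin.ext hvB
      rw [hu', hv'] at hθ
      have hnd : ((pathE a).map (Sym2.map Sum.inl) + (pathE b).map (Sym2.map Sum.inr)
          + ({s(Sum.inl (⟨a - 1, by omega⟩ : Fin a), Sum.inr (⟨0, hb⟩ : Fin b))} :
            Multiset (Sym2 (Fin a ⊕ Fin b)))).Nodup := by
        rw [← hθ]
        exact Multiset.Nodup.map (Sym2.map.injective θ.injective) (hS n (by omega)).1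
      obtain ⟨E2, hE2⟩ := path_merge ha hb hab _ hnd rfl
      refine ⟨θ.trans E2, ?_⟩
      rw [Equiv.coe_trans, ← map_map_sym2, hθ, hE2]
    · -- middle vertex on the right: K_{1,3} at σb v
      right
      set θ : Fin n ≃ (Fin a ⊕ Fin b) := ψ.trans (Equiv.sumCongr σa σb) with hθdef
      have hθ := theta_eq Gs hψ σa σb hσa hσb
      have hpull : ∀ (w1 w2 : Fin a ⊕ Fin b),
          s(w1, w2) ∈ (pathE a).map (Sym2.map Sum.inl) + (pathE b).map (Sym2.map Sum.inr)
            + {s(Sum.inl (σa u), Sum.inr (σb v))} →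
          s(θ.symm w1, θ.symm w2) ∈ Gs n := by
        intro w1 w2 h
        apply mem_of_map_equiv θ
        rw [hθ]
        simpa [Equiv.apply_symm_apply] using h
      set j0 : ℕ := ((σb v) : ℕ) with hj0
      have hj0b := (σb v).isLt
      set iprev : Fin b := ⟨j0 - 1, by omega⟩ with hiprev
      set inext : Fin b := ⟨j0 + 1, by omega⟩ with hinext
      refine ⟨θ.symm (Sum.inr (σb v)), θ.symm (Sum.inr iprev), θ.symm (Sum.inr inext),
        θ.symm (Sum.inl (σa u)), ?_, ?_, ?_, ?_, ?_, ?_, ?_, ?_, ?_⟩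
      · intro h
        have := θ.symm.injective h
        rw [Sum.inr.injEq] at this
        have := congrArg Fin.val this
        simp [hiprev, hinext] at this <;> omega
      · intro h
        exact absurd (θ.symm.injective h) (by simp)
      · intro h
        exact absurd (θ.symm.injective h) (by simp)
      · intro h
        have := θ.symm.injective h
        rw [Sum.inr.injEq] at this
        have := congrArg Fin.val this
        simp [hiprev] at this <;> omega
      · intro h
        have := θ.symm.injective h
        rw [Sum.inr.injEq] at this
        have := congrArg Fin.val this
        simp [hinext] at this <;> omega
      · intro h
        exact absurd (θ.symm.injective h) (by simp)
      · -- edge iprev -- center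
        apply hpull
        refine Multiset.mem_add.2 (Or.inl (Multiset.mem_add.2 (Or.inr ?_)))
        refine Multiset.mem_map.2 ⟨s(iprev, σb v), mem_pathE.2 ⟨iprev, σb v, ?_, rfl⟩, ?_⟩
        · simp [hiprev]; omega
        · rw [Sym2.map_pair_eq]
      · -- edge inext -- center
        apply hpull
        refine Multiset.mem_add.2 (Or.inl (Multiset.mem_add.2 (Or.inr ?_)))
        refine Multiset.mem_map.2 ⟨s(inext, σb v), mem_pathE.2 ⟨σb v, inext, ?_, Sym2.eq_swap.symm⟩, ?_⟩
        · simp [hinext, hj0]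
        · rw [Sym2.map_pair_eq]
      · -- crossing edge
        apply hpull
        refine Multiset.mem_add.2 (Or.inr ?_)
        rw [Multiset.mem_singleton]
  · -- middle vertex on the left: K_{1,3} at σa u
    right
    set θ : Fin n ≃ (Fin a ⊕ Fin b) := ψ.trans (Equiv.sumCongr σa σb) with hθdef
    have hθ := theta_eq Gs hψ σa σb hσa hσb
    have hpull : ∀ (w1 w2 : Fin a ⊕ Fin b),
        s(w1, w2) ∈ (pathE a).map (Sym2.map Sum.inl) + (pathE b).map (Sym2.map Sum.inr)
          + {s(Sum.inl (σa u), Sum.inr (σb v))} →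
        s(θ.symm w1, θ.symm w2) ∈ Gs n := by
      intro w1 w2 h
      apply mem_of_map_equiv θ
      rw [hθ]
      simpa [Equiv.apply_symm_apply] using h
    set i0 : ℕ := ((σa u) : ℕ) with hi0
    have hi0a := (σa u).isLt
    set iprev : Fin a := ⟨i0 - 1, by omega⟩ with hiprev
    set inext : Fin a := ⟨i0 + 1, by omega⟩ with hinext
    refine ⟨θ.symm (Sum.inl (σa u)), θ.symm (Sum.inl iprev), θ.symm (Sum.inl inext),
      θ.symm (Sum.inr (σb v)), ?_, ?_, ?_, ?_, ?_, ?_, ?_, ?_, ?_⟩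
    · intro h
      have := θ.symm.injective h
      rw [Sum.inl.injEq] at this
      have := congrArg Fin.val this
      simp [hiprev, hinext] at this <;> omega
    · intro h
      exact absurd (θ.symm.injective h) (by simp)
    · intro h
      exact absurd (θ.symm.injective h) (by simp)
    · intro h
      have := θ.symm.injective h
      rw [Sum.inl.injEq] at this
      have := congrArg Fin.val this
      simp [hiprev] at this <;> omega
    · intro h
      have := θ.symm.injective h
      rw [Sum.inl.injEq] at this
      have := congrArg Fin.val this
      simp [hinext] at this <;> omega
    · intro h
      exact absurd (θ.symm.injective h) (by simp)
    · apply hpull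
      refine Multiset.mem_add.2 (Or.inl (Multiset.mem_add.2 (Or.inl ?_)))
      refine Multiset.mem_map.2 ⟨s(iprev, σa u), mem_pathE.2 ⟨iprev, σa u, ?_, rfl⟩, ?_⟩
      · simp [hiprev]; omega
      · rw [Sym2.map_pair_eq]
    · apply hpull
      refine Multiset.mem_add.2 (Or.inl (Multiset.mem_add.2 (Or.inl ?_)))
      refine Multiset.mem_map.2 ⟨s(inext, σa u), mem_pathE.2 ⟨σa u, inext, ?_, Sym2.eq_swap.symm⟩, ?_⟩
      · simp [hinext, hi0]
      · rw [Sym2.map_pair_eq]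
    · apply hpull
      refine Multiset.mem_add.2 (Or.inr ?_)
      rw [Multiset.mem_singleton]
      exact Sym2.eq_swap

/-- In a star with at least two vertices, every vertex has a neighbour. -/
lemma star_neighbor {k : ℕ} (hk : 2 ≤ k) (w : Fin k) :
    ∃ p : Fin k, p ≠ w ∧ s(p, w) ∈ starE k := by
  by_cases hw : (w : ℕ) = k - 1
  · refine ⟨⟨0, by omega⟩, ?_, ?_⟩
    · intro h; have := congrArg Fin.val h; simp at this; omega
    · exact mem_starE.2 ⟨⟨0, by omega⟩, w, by simp; omega, by omega, rfl⟩
  · have hwk := w.isLt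
    refine ⟨⟨k - 1, by omega⟩, ?_, ?_⟩
    · intro h; have := congrArg Fin.val h; simp at this; omega
    · refine mem_starE.2 ⟨w, ⟨k - 1, by omega⟩, by omega, by simp; omega, Sym2.eq_swap.symm⟩

/-- The key step in the star branch: a vertex glued onto a star is a star or has a `P₄`. -/
lemma star_step (hS : HS Gs) (hC : HC Gs) {n : ℕ}
    (hP4 : ∀ p q r t : Fin n, p ≠ q → p ≠ r → p ≠ t → q ≠ r → q ≠ t → r ≠ t →
      s(p, q) ∈ Gs n → s(q, r) ∈ Gs n → s(r, t) ∈ Gs n → False)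
    {b : ℕ} (hb : 1 ≤ b) (h1b : 1 + b = n) (hn : 5 ≤ n)
    (θ : Fin n ≃ (Fin 1 ⊕ Fin b)) (u1 : Fin 1) (v' : Fin b)
    (hθ : (Gs n).map (Sym2.map θ) =
      (starE b).map (Sym2.map Sum.inr) + {s(Sum.inl u1, Sum.inr v')}) :
    ∃ σ : Fin n ≃ Fin n, (Gs n).map (Sym2.map σ) = starE n := by
  have hbn : b = n - 1 := by omega
  have hb4 : 4 ≤ b := by omega
  have hn1 : 1 ≤ n := by omega
  have hpull : ∀ (w1 w2 : Fin 1 ⊕ Fin b),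
      s(w1, w2) ∈ (starE b).map (Sym2.map Sum.inr) + {s(Sum.inl u1, Sum.inr v')} →
      s(θ.symm w1, θ.symm w2) ∈ Gs n := by
    intro w1 w2 h
    apply mem_of_map_equiv θ
    rw [hθ]
    simpa [Equiv.apply_symm_apply] using h
  set cb : Fin b := ⟨b - 1, by omega⟩ with hcb
  by_cases hv : v' = cb
  · -- the glued vertex is attached to the centre: the whole graph is a star
    set c : Fin n := θ.symm (Sum.inr cb) with hc
    have hθc : θ c = Sum.inr cb := by rw [hc, Equiv.apply_symm_apply]
    have hcenter : ∀ z ∈ Gs n, c ∈ z := by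
      intro z hz
      have hmem : Sym2.map θ z ∈ (starE b).map (Sym2.map Sum.inr)
          + {s(Sum.inl u1, Sum.inr v')} := by
        rw [← hθ]; exact Multiset.mem_map_of_mem _ hz
      have hcmem : θ c ∈ Sym2.map ⇑θ z := by
        rcases Multiset.mem_add.1 hmem with h | h
        · rcases Multiset.mem_map.1 h with ⟨e, he, heq⟩
          rcases mem_starE.1 he with ⟨i, jj, hi, hj, rfl⟩
          have hjcb : jj = cb := by
            apply Fin.ext; rw [hcb]; simp only [Fin.val_mk]; omega
          rw [Sym2.map_pair_eq] at heq
          rw [← heq, hθc, hjcb]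
          simp
        · rw [Multiset.mem_singleton] at h
          rw [h, hθc, hv]
          simp
      rcases Sym2.mem_map.1 hcmem with ⟨w, hwz, hww⟩
      rwa [← θ.injective hww]
    exact star_build hn1 (Gs n) (hS n hn1).1 (hS n hn1).2
      (fun u v => hC n hn1 u v) c hcenter
  · -- otherwise we exhibit a P₄
    exfalso
    have hvlt := v'.isLt
    have hvne : (v' : ℕ) ≠ b - 1 := fun h => hv (Fin.ext (by rw [hcb]; simp only [Fin.val_mk]; omega))
    set l : Fin b := if (v' : ℕ) = 0 then ⟨1, by omega⟩ else ⟨0, by omega⟩ with hl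
    have hlval : (l : ℕ) = if (v' : ℕ) = 0 then 1 else 0 := by
      rw [hl]; split <;> simp
    have hlv : l ≠ v' := by
      intro h; have := congrArg Fin.val h; rw [hlval] at this
      split at this <;> omega
    have hlcb : l ≠ cb := by
      intro h; have := congrArg Fin.val h; rw [hlval] at this
      rw [hcb] at this; simp only [Fin.val_mk] at this; split at this <;> omega
    have hvcb : v' ≠ cb := hv
    -- the four vertices
    have e1 : s(θ.symm (Sum.inl u1), θ.symm (Sum.inr v')) ∈ Gs n := by
      apply hpull
      refine Multiset.mem_add.2 (Or.inr ?_)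
      rw [Multiset.mem_singleton]
    have e2 : s(θ.symm (Sum.inr v'), θ.symm (Sum.inr cb)) ∈ Gs n := by
      apply hpull
      refine Multiset.mem_add.2 (Or.inl ?_)
      refine Multiset.mem_map.2 ⟨s(v', cb), ?_, ?_⟩
      · exact mem_starE.2 ⟨v', cb, by omega, by rw [hcb]; simp; omega, rfl⟩
      · rw [Sym2.map_pair_eq]
    have e3 : s(θ.symm (Sum.inr cb), θ.symm (Sum.inr l)) ∈ Gs n := by
      apply hpull
      refine Multiset.mem_add.2 (Or.inl ?_)
      refine Multiset.mem_map.2 ⟨s(l, cb), ?_, ?_⟩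
      · refine mem_starE.2 ⟨l, cb, ?_, by rw [hcb]; simp; omega, rfl⟩
        rw [hlval]; split <;> omega
      · rw [Sym2.map_pair_eq]
        exact Sym2.eq_swap
    exact hP4 (θ.symm (Sum.inl u1)) (θ.symm (Sum.inr v')) (θ.symm (Sum.inr cb))
      (θ.symm (Sum.inr l))
      (fun h => by have := θ.symm.injective h; simp at this)
      (fun h => by have := θ.symm.injective h; simp at this)
      (fun h => by have := θ.symm.injective h; simp at this)
      (fun h => by have := θ.symm.injective h; rw [Sum.inr.injEq] at this; exact hvcb this)
      (fun h => by have := θ.symm.injective h; rw [Sum.inr.injEq] at this; exact hlv this.symm)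
      (fun h => by have := θ.symm.injective h; rw [Sum.inr.injEq] at this; exact hlcb this.symm)
      e1 e2 e3

lemma map_refl {k : ℕ} (M : Multiset (Sym2 (Fin k))) :
    M.map (Sym2.map (Equiv.refl (Fin k))) = M := by
  have : (Sym2.map ⇑(Equiv.refl (Fin k))) = id := by
    funext z; simp [Sym2.map_id]
  rw [this, Multiset.map_id]

lemma path_one (hS : HS Gs) : ∃ σ : Fin 1 ≃ Fin 1, (Gs 1).map (Sym2.map σ) = pathE 1 :=
  ⟨Equiv.refl _, by rw [G_one Gs hS, pathE_one]; simp⟩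

lemma path_two (hS : HS Gs) (hC : HC Gs) :
    ∃ σ : Fin 2 ≃ Fin 2, (Gs 2).map (Sym2.map σ) = pathE 2 :=
  ⟨Equiv.refl _, by rw [G_two Gs hS hC, map_refl]⟩

lemma path_small (hS : HS Gs) (hC : HC Gs) (hN : HN Gs) :
    ∀ n, 1 ≤ n → n ≤ 3 → ∃ σ : Fin n ≃ Fin n, (Gs n).map (Sym2.map σ) = pathE n := by
  have h3 : ∀ n, 2 ≤ n → n ≤ 3 →
      (∀ k, 1 ≤ k → k < n → ∃ σ : Fin k ≃ Fin k, (Gs k).map (Sym2.map σ) = pathE k) →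
      ∃ σ : Fin n ≃ Fin n, (Gs n).map (Sym2.map σ) = pathE n := by
    intro n h2 hle IH
    rcases path_step Gs hS hC hN h2 IH with h | ⟨c, x, y, z, h1, h2', h3', h4, h5, h6, _, _, _⟩
    · exact h
    · exact absurd (four_distinct hle c x y z h4 h5 h6 h1 h2' h3') (fun h => h)
  intro n hn hle
  interval_cases n
  · exact path_one Gs hS
  · exact h3 2 (by omega) (by omega) (fun k hk hlt => by
      interval_cases k
      · exact path_one Gs hS)
  · exact h3 3 (by omega) (by omega) (fun k hk hlt => by
      interval_cases k
      · exact path_one Gs hS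
      · exact path_two Gs hS hC)

lemma path_all (hS : HS Gs) (hC : HC Gs) (hN : HN Gs)
    (hp4 : ∃ σ : Fin 4 ≃ Fin 4, (Gs 4).map (Sym2.map σ) = pathE 4) :
    ∀ n, 1 ≤ n → ∃ σ : Fin n ≃ Fin n, (Gs n).map (Sym2.map σ) = pathE n := by
  intro n
  induction n using Nat.strong_induction_on with
  | _ n IH =>
    intro hn
    rcases Nat.lt_or_ge n 2 with h | h
    · interval_cases n
      exact path_one Gs hS
    · rcases path_step Gs hS hC hN h (fun k hk hlt => IH k hlt hk) with hgood |
        ⟨c, x, y, z, h1, h2', h3', h4, h5, h6, e1, e2, e3⟩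
      · exact hgood
      · exact absurd (k13_star Gs hS hC hN hn c x y z h1 h2' h3' h4 h5 h6 e1 e2 e3)
          (fun hstar => iso_contra Gs hp4 hstar)

lemma dichot4 (hS : HS Gs) (hC : HC Gs) (hN : HN Gs) :
    (∃ σ : Fin 4 ≃ Fin 4, (Gs 4).map (Sym2.map σ) = pathE 4) ∨
    (∃ σ : Fin 4 ≃ Fin 4, (Gs 4).map (Sym2.map σ) = starE 4) := by
  rcases path_step Gs hS hC hN (by omega : 2 ≤ 4)
      (fun k hk hlt => path_small Gs hS hC hN k hk (by omega)) with h |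
      ⟨c, x, y, z, h1, h2', h3', h4, h5, h6, e1, e2, e3⟩
  · exact Or.inl h
  · exact Or.inr (k13_star Gs hS hC hN (by omega) c x y z h1 h2' h3' h4 h5 h6 e1 e2 e3)

lemma star_all (hS : HS Gs) (hC : HC Gs) (hN : HN Gs)
    (hs4 : ∃ σ : Fin 4 ≃ Fin 4, (Gs 4).map (Sym2.map σ) = starE 4) :
    ∀ n, 1 ≤ n → ∃ σ : Fin n ≃ Fin n, (Gs n).map (Sym2.map σ) = starE n := by
  have hNoP4 : ∀ m, 1 ≤ m → ∀ p q r t : Fin m, p ≠ q → p ≠ r → p ≠ t → q ≠ r → q ≠ t →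
      r ≠ t → s(p, q) ∈ Gs m → s(q, r) ∈ Gs m → s(r, t) ∈ Gs m → False := by
    intro m hm p q r t h1 h2 h3 h4 h5 h6 e1 e2 e3
    exact iso_contra Gs (p4_path Gs hS hC hN hm p q r t h1 h2 h3 h4 h5 h6 e1 e2 e3) hs4
  intro n
  induction n using Nat.strong_induction_on with
  | _ n IH =>
    intro hn
    rcases Nat.lt_or_ge n 5 with hlt | hge
    · interval_cases n
      · exact ⟨Equiv.refl _, by rw [G_one Gs hS, starE_one]; simp⟩
      · exact ⟨Equiv.refl _, by rw [G_two Gs hS hC, map_refl, pathE_two, starE_two]⟩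
      · obtain ⟨σ3, hσ3⟩ := path_small Gs hS hC hN 3 (by omega) (by omega)
        refine ⟨σ3.trans (Equiv.swap (1 : Fin 3) 2), ?_⟩
        rw [Equiv.coe_trans, ← map_map_sym2, hσ3, p3s3]
      · exact hs4
    · -- n ≥ 5
      obtain ⟨a, b, ha, hb, hab, ψ, u, v, hψ⟩ := decomp Gs hS hC hN (n := n) (by omega)
      obtain ⟨σA, hσA⟩ := IH a (by omega) ha
      obtain ⟨σB, hσB⟩ := IH b (by omega) hb
      have hθ := theta_eq Gs hψ σA σB hσA hσB
      -- a = 1 or b = 1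
      have hab1 : a = 1 ∨ b = 1 := by
        by_contra hcon
        push_neg at hcon
        have ha2 : 2 ≤ a := by omega
        have hb2 : 2 ≤ b := by omega
        obtain ⟨pa, hpa, hpae⟩ := star_neighbor ha2 (σA u)
        obtain ⟨pb, hpb, hpbe⟩ := star_neighbor hb2 (σB v)
        set θ : Fin n ≃ (Fin a ⊕ Fin b) := ψ.trans (Equiv.sumCongr σA σB) with hθdef
        have hpull : ∀ (w1 w2 : Fin a ⊕ Fin b),
            s(w1, w2) ∈ (starE a).map (Sym2.map Sum.inl) + (starE b).map (Sym2.map Sum.inr)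
              + {s(Sum.inl (σA u), Sum.inr (σB v))} →
            s(θ.symm w1, θ.symm w2) ∈ Gs n := by
          intro w1 w2 hh
          apply mem_of_map_equiv θ
          rw [hθ]
          simpa [Equiv.apply_symm_apply] using hh
        have e1 : s(θ.symm (Sum.inl pa), θ.symm (Sum.inl (σA u))) ∈ Gs n := by
          apply hpull
          refine Multiset.mem_add.2 (Or.inl (Multiset.mem_add.2 (Or.inl ?_)))
          exact Multiset.mem_map.2 ⟨s(pa, σA u), hpae, by rw [Sym2.map_pair_eq]⟩
        have e2 : s(θ.symm (Sum.inl (σA u)), θ.symm (Sum.inr (σB v))) ∈ Gs n := by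
          apply hpull
          exact Multiset.mem_add.2 (Or.inr (by rw [Multiset.mem_singleton]))
        have e3 : s(θ.symm (Sum.inr (σB v)), θ.symm (Sum.inr pb)) ∈ Gs n := by
          apply hpull
          refine Multiset.mem_add.2 (Or.inl (Multiset.mem_add.2 (Or.inr ?_)))
          refine Multiset.mem_map.2 ⟨s(pb, σB v), hpbe, ?_⟩
          rw [Sym2.map_pair_eq]
          exact Sym2.eq_swap
        exact hNoP4 n hn (θ.symm (Sum.inl pa)) (θ.symm (Sum.inl (σA u)))
          (θ.symm (Sum.inr (σB v))) (θ.symm (Sum.inr pb))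
          (fun h => by have := θ.symm.injective h; rw [Sum.inl.injEq] at this; exact hpa this)
          (fun h => by have := θ.symm.injective h; simp at this)
          (fun h => by have := θ.symm.injective h; simp at this)
          (fun h => by have := θ.symm.injective h; simp at this)
          (fun h => by have := θ.symm.injective h; simp at this)
          (fun h => by have := θ.symm.injective h; rw [Sum.inr.injEq] at this; exact hpb this.symm)
          e1 e2 e3
      rcases hab1 with rfl | rfl
      · -- a = 1
        have hθ' : (Gs n).map (Sym2.map (ψ.trans (Equiv.sumCongr σA σB))) =
            (starE b).map (Sym2.map Sum.inr) + {s(Sum.inl (σA u), Sum.inr (σB v))} := by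
          rw [hθ, starE_one]
          simp
        exact star_step Gs hS hC (hNoP4 n hn) hb hab hge
          (ψ.trans (Equiv.sumCongr σA σB)) (σA u) (σB v) hθ'
      · -- b = 1
        have hθ2 := swap_decomp Gs hθ
        have hθ' : (Gs n).map (Sym2.map ((ψ.trans (Equiv.sumCongr σA σB)).trans
            (Equiv.sumComm (Fin a) (Fin 1)))) =
            (starE a).map (Sym2.map Sum.inr) + {s(Sum.inl (σB v), Sum.inr (σA u))} := by
          rw [hθ2, starE_one]
          simp
        exact star_step Gs hS hC (hNoP4 n hn) ha (by omega) hge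
          ((ψ.trans (Equiv.sumCongr σA σB)).trans (Equiv.sumComm (Fin a) (Fin 1)))
          (σB v) (σA u) hθ'

end NeatAux

/-- **Proposition.** The only neat families of unweighted graphs are the paths and the
stars: if `{G_n}_{n ≥ 1}` is a nifty family (simple connected, `G_n` on `n` vertices) such
that deleting any set of edges of any `G_n` yields a graph isomorphic to some `G_λ` with
`λ ⊢ n`, then either `G_n ≅ P_n` for all `n ≥ 1` or `G_n ≅ S_n` for all `n ≥ 1`. -/
theorem neat_families_are_paths_or_stars
    (Gs : ∀ n : ℕ, Multiset (Sym2 (Fin n)))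
    (hsimple : ∀ n, 1 ≤ n → (Gs n).Nodup ∧ ∀ e ∈ Gs n, ¬ e.IsDiag)
    (hconn : ∀ n, 1 ≤ n → ∀ u v : Fin n,
      Relation.ReflTransGen (fun x y : Fin n => s(x, y) ∈ Gs n) u v)
    (hneat : ∀ n, 1 ≤ n → ∀ S ≤ Gs n, ∃ l : List ℕ,
      l.Pairwise (· ≥ ·) ∧ (∀ x ∈ l, 0 < x) ∧ l.sum = n ∧
      ∃ φ : Fin n ≃ (Σ i : Fin l.length, Fin (l.get i)),
        (Gs n - S).map (Sym2.map φ) =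
          unionE (m := fun i : Fin l.length => l.get i) (fun i => Gs (l.get i))) :
    (∀ n, 1 ≤ n → ∃ φ : Fin n ≃ Fin n, (Gs n).map (Sym2.map φ) = pathE n) ∨
    (∀ n, 1 ≤ n → ∃ φ : Fin n ≃ Fin n, (Gs n).map (Sym2.map φ) = starE n) := by
  have hS : HS Gs := hsimple
  have hC : HC Gs := hconn
  have hN : HN Gs := hneat
  rcases dichot4 Gs hS hC hN with h | h
  · exact Or.inl (path_all Gs hS hC hN h)
  · exact Or.inr (star_all Gs hS hC hN h)

end CSF
end

section
/- For every partition λ, the power sum symmetric functions expand into the chromatic basis generated by the family of paths via p_λ = Σ_{α ≼ λ} (−1)^{|λ|−ℓ(α)} X_{P_{α̃}}, and conversely X_{P_λ} = Σ_{α ≼ λ} (−1)^{|λ|−ℓ(α)} p_{α̃}, where both sums are over compositions α refining λ (viewed as a composition). -/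
open scoped BigOperators
open scoped Classical

namespace CSF

noncomputable def cnt {T : Type*} (F : T → (ℕ+ →₀ ℕ)) : MvPowerSeries ℕ+ ℚ :=
  fun m => (Nat.card {x : T // F x = m} : ℚ)

lemma coeff_cnt {T : Type*} (F : T → (ℕ+ →₀ ℕ)) (m : ℕ+ →₀ ℕ) :
    MvPowerSeries.coeff m (cnt F) = (Nat.card {x : T // F x = m} : ℚ) := rfl

lemma cnt_one {T : Type*} [Unique T] : cnt (fun _ : T => (0 : ℕ+ →₀ ℕ)) = 1 := by
  apply MvPowerSeries.ext; intro m
  rw [coeff_cnt, MvPowerSeries.coeff_one]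
  by_cases h : m = 0
  · rw [if_pos h]
    rw [Nat.card_congr (Equiv.subtypeUnivEquiv (fun x => h ▸ rfl))]
    rw [Nat.card_unique]; norm_num
  · rw [if_neg h]
    have : IsEmpty {x : T // (0 : ℕ+ →₀ ℕ) = m} := ⟨fun x => h x.2.symm⟩
    rw [Nat.card_of_isEmpty]; norm_num

lemma cnt_congr {T U : Type*} (F : T → (ℕ+ →₀ ℕ)) (G : U → (ℕ+ →₀ ℕ))
    (e : T ≃ U) (h : ∀ x, G (e x) = F x) : cnt F = cnt G := by
  apply MvPowerSeries.ext; intro m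
  rw [coeff_cnt, coeff_cnt]
  congr 1
  exact Nat.card_congr (Equiv.subtypeEquiv e (fun a => by rw [h a]))

lemma cnt_mul {T U : Type*} (F : T → (ℕ+ →₀ ℕ)) (G : U → (ℕ+ →₀ ℕ))
    (hF : ∀ m, Finite {x : T // F x = m}) (hG : ∀ m, Finite {y : U // G y = m}) :
    cnt F * cnt G = cnt (fun p : T × U => F p.1 + G p.2) := by
  apply MvPowerSeries.ext; intro m
  rw [MvPowerSeries.coeff_mul, coeff_cnt]
  have e : {p : T × U // F p.1 + G p.2 = m} ≃
      Σ q : (Finset.HasAntidiagonal.antidiagonal m : Finset ((ℕ+ →₀ ℕ) × (ℕ+ →₀ ℕ))),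
        ({x : T // F x = q.1.1} × {y : U // G y = q.1.2}) :=
    { toFun := fun p => ⟨⟨(F p.1.1, G p.1.2), Finset.HasAntidiagonal.mem_antidiagonal.2 p.2⟩,
        ⟨p.1.1, rfl⟩, ⟨p.1.2, rfl⟩⟩
      invFun := fun s => ⟨(s.2.1.1, s.2.2.1), by
        rw [s.2.1.2, s.2.2.2]; exact Finset.HasAntidiagonal.mem_antidiagonal.1 s.1.2⟩
      left_inv := fun p => rfl
      right_inv := by
        rintro ⟨⟨⟨m1, m2⟩, hq⟩, ⟨x, hx⟩, ⟨y, hy⟩⟩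
        dsimp at hx hy ⊢
        subst hx; subst hy; rfl }
  rw [Nat.card_congr e]
  letI : ∀ q : (Finset.HasAntidiagonal.antidiagonal m : Finset ((ℕ+ →₀ ℕ) × (ℕ+ →₀ ℕ))),
      Fintype ({x : T // F x = q.1.1} × {y : U // G y = q.1.2}) := fun q =>
    @Fintype.ofFinite _ (by haveI := hF q.1.1; haveI := hG q.1.2; infer_instance)
  rw [Nat.card_eq_fintype_card, Fintype.card_sigma]
  push_cast
  rw [← Finset.sum_coe_sort (Finset.HasAntidiagonal.antidiagonal m)]
  apply Finset.sum_congr rfl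
  intro q _
  rw [coeff_cnt, coeff_cnt, ← Nat.card_eq_fintype_card, Nat.card_prod]
  push_cast
  rfl

def chainP (R : ℕ+ → ℕ+ → Prop) (n : ℕ) (κ : Fin n → ℕ+) : Prop :=
  ∀ i : ℕ, (h : i + 1 < n) → R (κ ⟨i, Nat.lt_of_succ_lt h⟩) (κ ⟨i + 1, h⟩)

def chainPfx (R : ℕ+ → ℕ+ → Prop) (n a : ℕ) (κ : Fin n → ℕ+) : Prop :=
  ∀ i : ℕ, i + 1 < a → (h : i + 1 < n) → R (κ ⟨i, Nat.lt_of_succ_lt h⟩) (κ ⟨i + 1, h⟩)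

def validP (R : ℕ+ → ℕ+ → Prop) (n a : ℕ) (κ : Fin n → ℕ+) : Prop :=
  a ≤ n ∧ chainPfx R n a κ ∧
    (∀ i : ℕ, a ≤ i → (h : i + 1 < n) → ¬ R (κ ⟨i, Nat.lt_of_succ_lt h⟩) (κ ⟨i + 1, h⟩))

def jo {n a : ℕ} (ha : a ≤ n) (κ1 : Fin a → ℕ+) (κ2 : Fin (n - a) → ℕ+) : Fin n → ℕ+ :=
  fun v => if h : (v : ℕ) < a then κ1 ⟨v, h⟩
    else κ2 ⟨(v : ℕ) - a, by have := v.isLt; omega⟩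

lemma jo_lt {n a : ℕ} (ha : a ≤ n) (κ1 : Fin a → ℕ+) (κ2 : Fin (n - a) → ℕ+)
    (v : Fin n) (h : (v : ℕ) < a) : jo ha κ1 κ2 v = κ1 ⟨v, h⟩ := dif_pos h

lemma jo_ge {n a : ℕ} (ha : a ≤ n) (κ1 : Fin a → ℕ+) (κ2 : Fin (n - a) → ℕ+)
    (v : Fin n) (h : ¬ (v : ℕ) < a) :
    jo ha κ1 κ2 v = κ2 ⟨(v : ℕ) - a, by have := v.isLt; omega⟩ := dif_neg h

lemma jo_mon {n a : ℕ} (ha : a ≤ n) (κ1 : Fin a → ℕ+) (κ2 : Fin (n - a) → ℕ+) :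
    (∑ v : Fin n, Finsupp.single (jo ha κ1 κ2 v) 1)
      = (∑ i : Fin a, Finsupp.single (κ1 i) 1)
        + (∑ j : Fin (n - a), Finsupp.single (κ2 j) 1) := by
  have hadd : a + (n - a) = n := by omega
  have hE : ∀ f : Fin n → (ℕ+ →₀ ℕ), (∑ v : Fin n, f v) =
      ∑ x : Fin a ⊕ Fin (n - a), f ((finSumFinEquiv.trans (finCongr hadd)) x) := fun f =>
    (Equiv.sum_comp (finSumFinEquiv.trans (finCongr hadd)) f).symm
  rw [hE, Fintype.sum_sum_type]
  congr 1
  · apply Finset.sum_congr rfl; intro i _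
    have hco : (((finSumFinEquiv.trans (finCongr hadd)) (Sum.inl i) : Fin n) : ℕ) = (i : ℕ) := by
      simp
    rw [jo_lt ha κ1 κ2 _ (by rw [hco]; exact i.isLt)]
    exact congrArg (fun x => Finsupp.single x 1) (congrArg κ1 (Fin.ext (by simpa using hco)))
  · apply Finset.sum_congr rfl; intro j _
    have hco : (((finSumFinEquiv.trans (finCongr hadd)) (Sum.inr j) : Fin n) : ℕ) = a + (j : ℕ) := by
      simp
    rw [jo_ge ha κ1 κ2 _ (by omega)]
    exact congrArg (fun x => Finsupp.single x 1) (congrArg κ2 (Fin.ext (by simp only [hco]; omega)))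

lemma jo_split {n a : ℕ} (ha : a ≤ n) (κ : Fin n → ℕ+) :
    jo ha (fun i => κ ⟨(i : ℕ), by have := i.isLt; omega⟩)
      (fun j => κ ⟨a + (j : ℕ), by have := j.isLt; omega⟩) = κ := by
  funext v
  by_cases h : (v : ℕ) < a
  · rw [jo_lt ha _ _ _ h]
  · rw [jo_ge ha _ _ _ h]
    exact congrArg κ (Fin.ext (by show a + ((v:ℕ) - a) = (v:ℕ); have := v.isLt; omega))

lemma card_join (R : ℕ+ → ℕ+ → Prop) {n a : ℕ} (ha : a ≤ n) (m : ℕ+ →₀ ℕ) :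
    Nat.card {p : {κ1 : Fin a → ℕ+ // chainP R a κ1} ×
        {κ2 : Fin (n - a) → ℕ+ // chainP (fun x y => ¬ R x y) (n - a) κ2} //
      ((∑ v, Finsupp.single (p.1.1 v) 1) + (∑ v, Finsupp.single (p.2.1 v) 1)) = m}
    = Nat.card {κ : Fin n → ℕ+ // validP R n a κ ∧ (∑ v, Finsupp.single (κ v) 1) = m} := by
  apply Nat.card_congr
  refine
    { toFun := fun p => ⟨jo ha p.1.1.1 p.1.2.1, ⟨?_, by rw [jo_mon]; exact p.2⟩⟩
      invFun := fun κ => ⟨(⟨fun i => κ.1 ⟨i, by have := i.isLt; omega⟩, ?_⟩,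
                           ⟨fun j => κ.1 ⟨a + (j : ℕ), by have := j.isLt; omega⟩, ?_⟩), ?_⟩
      left_inv := ?_
      right_inv := ?_ }
  · -- validP of join
    obtain ⟨⟨⟨κ1, h1⟩, ⟨κ2, h2⟩⟩, hm⟩ := p
    refine ⟨ha, ?_, ?_⟩
    · intro i hia hin
      rw [jo_lt ha κ1 κ2 _ (by simp; omega), jo_lt ha κ1 κ2 _ (by simp; omega)]
      exact h1 i hia
    · intro i hai hin
      rw [jo_ge ha κ1 κ2 _ (by simp; omega), jo_ge ha κ1 κ2 _ (by simp; omega)]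
      have h2' := h2 (i - a) (by omega)
      have e1 : (⟨(⟨i, Nat.lt_of_succ_lt hin⟩ : Fin n) - a, by simp; omega⟩ : Fin (n - a))
          = ⟨i - a, by omega⟩ := by apply Fin.ext; simp
      intro hR
      apply h2'
      have e2 : ((⟨i - a, Nat.lt_of_succ_lt (by omega : i - a + 1 < n - a)⟩ : Fin (n-a))) = (⟨(⟨i, Nat.lt_of_succ_lt hin⟩ : Fin n) - a, by simp; omega⟩ : Fin (n - a)) := by
        apply Fin.ext; simp
      have e3 : ((⟨i - a + 1, (by omega : i - a + 1 < n - a)⟩ : Fin (n-a))) = (⟨(⟨i + 1, hin⟩ : Fin n) - a, by simp; omega⟩ : Fin (n - a)) := by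
        apply Fin.ext; show i - a + 1 = i + 1 - a; omega
      rw [e2, e3]
      exact hR
  · -- prefix chain of split
    intro i hia
    exact κ.2.1.2.1 i (by omega) (by have := κ.2.1.1; omega)
  · -- suffix chain of split
    intro j hj
    exact κ.2.1.2.2 (a + j) (by omega) (by omega)
  · -- mon of split
    rw [← jo_mon ha, jo_split ha, κ.2.2]
  · -- left inverse
    rintro ⟨⟨⟨κ1, h1⟩, ⟨κ2, h2⟩⟩, hm⟩
    apply Subtype.ext
    refine Prod.ext (Subtype.ext (funext fun i => ?_)) (Subtype.ext (funext fun j => ?_))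
    · show jo ha κ1 κ2 ⟨(i : ℕ), _⟩ = κ1 i
      rw [jo_lt ha κ1 κ2 _ (by exact i.isLt)]
    · show jo ha κ1 κ2 ⟨a + (j : ℕ), _⟩ = κ2 j
      rw [jo_ge ha κ1 κ2 _ (by show ¬ a + (j:ℕ) < a; omega)]
      exact congrArg κ2 (Fin.ext (by show a + (j:ℕ) - a = (j:ℕ); omega))
  · -- right inverse
    rintro ⟨κ, hκ⟩
    apply Subtype.ext
    exact jo_split ha κ

lemma valid_mem (R : ℕ+ → ℕ+ → Prop) {n : ℕ} (hn : 1 ≤ n) (κ : Fin n → ℕ+) :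
    ∀ a, validP R n a κ →
      a = Nat.findGreatest (fun c => chainPfx R n c κ) n - 1 ∨
      a = Nat.findGreatest (fun c => chainPfx R n c κ) n := by
  set P : ℕ → Prop := fun c => chainPfx R n c κ with hP
  set c := Nat.findGreatest P n with hc
  have hc_le : c ≤ n := Nat.findGreatest_le n
  have hP1 : P 1 := fun i hi => absurd hi (by omega)
  have hc1 : 1 ≤ c := Nat.le_findGreatest hn hP1
  intro a hv
  obtain ⟨han, hpre, hsuf⟩ := hv
  have hac : a ≤ c := Nat.le_findGreatest han hpre
  have hPc : P c := Nat.findGreatest_spec hn hP1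
  -- a ≥ c - 1
  by_contra hcon
  push_neg at hcon
  have ha2 : a + 2 ≤ c := by omega
  have hin : a + 1 < n := by omega
  exact hsuf a (le_refl a) hin (hPc a (by omega) hin)

lemma valid_pair (R : ℕ+ → ℕ+ → Prop) {n : ℕ} (hn : 1 ≤ n) (κ : Fin n → ℕ+) :
    (validP R n (Nat.findGreatest (fun c => chainPfx R n c κ) n) κ ↔
     validP R n (Nat.findGreatest (fun c => chainPfx R n c κ) n - 1) κ) := by
  set P : ℕ → Prop := fun c => chainPfx R n c κ with hP
  set c := Nat.findGreatest P n with hc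
  have hc_le : c ≤ n := Nat.findGreatest_le n
  have hP1 : P 1 := fun i hi => absurd hi (by omega)
  have hc1 : 1 ≤ c := Nat.le_findGreatest hn hP1
  have hPc : P c := Nat.findGreatest_spec hn hP1
  constructor
  · rintro ⟨han, hpre, hsuf⟩
    refine ⟨by omega, fun i hi hin => hPc i (by omega) hin, ?_⟩
    intro i hi hin
    rcases Nat.lt_or_ge i c with hic | hic
    · -- i = c - 1 : gap c-1 fails R by maximality
      have hieq : i = c - 1 := by omega
      have hnc : ¬ P (c + 1) := Nat.findGreatest_is_greatest (n := n) (by omega) (by omega)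
      intro hR
      apply hnc
      intro i' hi' hin'
      rcases Nat.lt_or_ge (i' + 1) c with h' | h'
      · exact hPc i' h' hin'
      · have : i' = c - 1 := by omega
        subst this
        have : i = c - 1 := hieq
        subst this
        exact hR
    · exact hsuf i hic hin
  · rintro ⟨han, hpre, hsuf⟩
    refine ⟨hc_le, hPc, ?_⟩
    intro i hi hin
    exact hsuf i (by omega) hin

lemma inner_zero (R : ℕ+ → ℕ+ → Prop) {n : ℕ} (hn : 1 ≤ n) (κ : Fin n → ℕ+) :
    ∑ a ∈ Finset.range (n + 1), ((-1 : ℚ) ^ a) * (if validP R n a κ then 1 else 0) = 0 := by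
  have hsum : ∑ a ∈ Finset.range (n + 1), ((-1 : ℚ) ^ a) * (if validP R n a κ then 1 else 0)
      = ∑ a ∈ (Finset.range (n + 1)).filter (fun a => validP R n a κ), ((-1 : ℚ) ^ a) := by
    rw [Finset.sum_filter]
    apply Finset.sum_congr rfl
    intro a _
    by_cases h : validP R n a κ <;> simp [h]
  rw [hsum]
  set P : ℕ → Prop := fun c => chainPfx R n c κ with hP
  set c := Nat.findGreatest P n with hc
  have hc_le : c ≤ n := Nat.findGreatest_le n
  have hP1 : P 1 := fun i hi => absurd hi (by omega)
  have hc1 : 1 ≤ c := Nat.le_findGreatest hn hP1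
  by_cases hv : validP R n c κ
  · have hv' : validP R n (c - 1) κ := (valid_pair R hn κ).1 hv
    have hfil : (Finset.range (n + 1)).filter (fun a => validP R n a κ) = {c - 1, c} := by
      apply Finset.ext
      intro a
      simp only [Finset.mem_filter, Finset.mem_range, Finset.mem_insert, Finset.mem_singleton]
      constructor
      · rintro ⟨_, hva⟩
        exact valid_mem R hn κ a hva
      · rintro (rfl | rfl)
        · exact ⟨by omega, hv'⟩
        · exact ⟨by omega, hv⟩
    rw [hfil]
    rw [Finset.sum_pair (by omega : c - 1 ≠ c)]
    have h2 : (-1 : ℚ) ^ c = -(-1 : ℚ) ^ (c - 1) := by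
      conv_lhs => rw [(by omega : c = (c - 1) + 1)]
      rw [pow_succ]; ring
    rw [h2]; ring
  · have hfil : (Finset.range (n + 1)).filter (fun a => validP R n a κ) = ∅ := by
      apply Finset.eq_empty_of_forall_notMem
      intro a ha
      rw [Finset.mem_filter] at ha
      rcases valid_mem R hn κ a ha.2 with h1 | h1
      · subst h1; exact hv ((valid_pair R hn κ).2 ha.2)
      · subst h1; exact hv ha.2
    rw [hfil, Finset.sum_empty]

noncomputable def chainSer (R : ℕ+ → ℕ+ → Prop) (n : ℕ) : MvPowerSeries ℕ+ ℚ :=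
  cnt (fun κ : {κ : Fin n → ℕ+ // chainP R n κ} => ∑ v, Finsupp.single (κ.1 v) 1)

lemma finite_mon_fiber' {V : Type*} [Fintype V] {S : Type*} (g : S → V → ℕ+)
    (hg : Function.Injective g) (m : ℕ+ →₀ ℕ) :
    Finite {x : S // (∑ v, Finsupp.single (g x v) 1) = m} := by
  have key : ∀ (x : S), (∑ v, Finsupp.single (g x v) 1) = m → ∀ (v : V),
      g x v ∈ m.support := by
    intro x hx v
    rw [Finsupp.mem_support_iff, ← hx]
    have h2 : (Finsupp.single (g x v) 1) (g x v) ≤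
        (∑ w, Finsupp.single (g x w) 1) (g x v) := by
      rw [Finset.sum_apply']
      exact Finset.single_le_sum (f := fun w => (Finsupp.single (g x w) 1) (g x v))
        (fun w _ => Nat.zero_le _) (Finset.mem_univ v)
    simp only [Finsupp.single_eq_same] at h2
    omega
  have : Function.Injective (fun x : {x : S // (∑ v, Finsupp.single (g x v) 1) = m} =>
      (fun v => (⟨g x.1 v, key x.1 x.2 v⟩ : {j : ℕ+ // j ∈ m.support}))) := by
    intro x y h
    apply Subtype.ext; apply hg; funext v
    exact congrArg Subtype.val (congrFun h v)
  exact Finite.of_injective _ this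

lemma finite_chain_fiber (R : ℕ+ → ℕ+ → Prop) (n : ℕ) (m : ℕ+ →₀ ℕ) :
    Finite {κ : {κ : Fin n → ℕ+ // chainP R n κ} //
      (∑ v, Finsupp.single (κ.1 v) 1) = m} :=
  finite_mon_fiber' (fun κ : {κ : Fin n → ℕ+ // chainP R n κ} => κ.1)
    (fun _ _ h => Subtype.ext h) m

lemma lemJ (R : ℕ+ → ℕ+ → Prop) {n : ℕ} (hn : 1 ≤ n) :
    ∑ a ∈ Finset.range (n + 1),
      ((-1 : ℚ) ^ a) • (chainSer R a * chainSer (fun x y => ¬ R x y) (n - a)) = 0 := by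
  apply MvPowerSeries.ext; intro m
  rw [map_sum, map_zero]
  have hterm : ∀ a ∈ Finset.range (n + 1),
      (MvPowerSeries.coeff m) (((-1 : ℚ) ^ a) • (chainSer R a * chainSer (fun x y => ¬ R x y) (n - a)))
      = (-1 : ℚ) ^ a *
          (Nat.card {κ : Fin n → ℕ+ // validP R n a κ ∧ (∑ v, Finsupp.single (κ v) 1) = m} : ℚ) := by
    intro a ha
    rw [Finset.mem_range] at ha
    rw [LinearMap.map_smul, smul_eq_mul]
    congr 1
    unfold chainSer
    rw [cnt_mul _ _ (finite_chain_fiber _ _) (finite_chain_fiber _ _), coeff_cnt]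
    rw [card_join R (by omega : a ≤ n) m]
  rw [Finset.sum_congr rfl hterm]
  -- turn counts into sums over the finite type K
  haveI hK : Finite {κ : Fin n → ℕ+ // (∑ v, Finsupp.single (κ v) 1) = m} :=
    finite_mon_fiber' (fun κ : Fin n → ℕ+ => κ) (fun _ _ h => h) m
  letI := Fintype.ofFinite {κ : Fin n → ℕ+ // (∑ v, Finsupp.single (κ v) 1) = m}
  have hcard : ∀ a, (Nat.card {κ : Fin n → ℕ+ // validP R n a κ ∧ (∑ v, Finsupp.single (κ v) 1) = m} : ℚ)
      = ∑ κ : {κ : Fin n → ℕ+ // (∑ v, Finsupp.single (κ v) 1) = m},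
          (if validP R n a κ.1 then 1 else 0) := by
    intro a
    have e : {κ : Fin n → ℕ+ // validP R n a κ ∧ (∑ v, Finsupp.single (κ v) 1) = m} ≃
        {x : {κ : Fin n → ℕ+ // (∑ v, Finsupp.single (κ v) 1) = m} // validP R n a x.1} :=
      ((Equiv.subtypeSubtypeEquivSubtypeInter _ _).trans
        (Equiv.subtypeEquivRight (fun κ => and_comm))).symm
    rw [Nat.card_congr e, Nat.card_eq_fintype_card, Fintype.card_subtype, Finset.card_filter]
    push_cast
    apply Finset.sum_congr rfl
    intro x _
    by_cases h : validP R n a x.1 <;> simp [h]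
  have : ∑ a ∈ Finset.range (n + 1), (-1 : ℚ) ^ a *
      (Nat.card {κ : Fin n → ℕ+ // validP R n a κ ∧ (∑ v, Finsupp.single (κ v) 1) = m} : ℚ)
      = ∑ κ : {κ : Fin n → ℕ+ // (∑ v, Finsupp.single (κ v) 1) = m},
          ∑ a ∈ Finset.range (n + 1), (-1 : ℚ) ^ a * (if validP R n a κ.1 then 1 else 0) := by
    rw [Finset.sum_comm]
    apply Finset.sum_congr rfl
    intro a _
    rw [hcard a, Finset.mul_sum]
  rw [this]
  apply Finset.sum_eq_zero
  intro κ _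
  exact inner_zero R hn κ.1

noncomputable def XP (n : ℕ) : MvPowerSeries ℕ+ ℚ := X (pathE n) (fun _ => 1)

lemma coeff_X {V : Type*} [Fintype V] (E : Multiset (Sym2 V)) (w : V → ℕ) (m : ℕ+ →₀ ℕ) :
    MvPowerSeries.coeff m (X E w) = (Nat.card {κ : V → ℕ+ // Proper E κ ∧ mon w κ = m} : ℚ) := rfl

lemma coeff_pS (i : ℕ) (m : ℕ+ →₀ ℕ) :
    MvPowerSeries.coeff m (pS i) = if ∃ j : ℕ+, m = Finsupp.single j i then 1 else 0 := rfl

lemma pS_zero : pS 0 = 1 := by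
  apply MvPowerSeries.ext; intro m
  rw [coeff_pS, MvPowerSeries.coeff_one]
  congr 1
  simp only [eq_iff_iff]
  constructor
  · rintro ⟨j, rfl⟩; simp
  · rintro rfl; exact ⟨1, by simp⟩

lemma X_cnt {V : Type*} [Fintype V] (E : Multiset (Sym2 V)) :
    X E (fun _ => 1) = cnt (fun κ : {κ : V → ℕ+ // Proper E κ} => ∑ v, Finsupp.single (κ.1 v) 1) := by
  apply MvPowerSeries.ext; intro m
  rw [coeff_X, coeff_cnt]
  congr 1
  apply Nat.card_congr
  exact ((Equiv.subtypeSubtypeEquivSubtypeInter (fun κ : V → ℕ+ => Proper E κ)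
    (fun κ => mon (fun _ => 1) κ = m))).symm

lemma mon_one {V : Type*} [Fintype V] (κ : V → ℕ+) :
    mon (fun _ => (1:ℕ)) κ = ∑ v, Finsupp.single (κ v) 1 := rfl

lemma Proper_pathE (n : ℕ) (κ : Fin n → ℕ+) :
    Proper (pathE n) κ ↔ chainP (fun x y => x ≠ y) n κ := by
  constructor
  · intro hP i h
    apply hP
    apply Multiset.mem_map.2
    refine ⟨(⟨i, Nat.lt_of_succ_lt h⟩, ⟨i + 1, h⟩), ?_, rfl⟩
    rw [Finset.mem_val, Finset.mem_filter]
    exact ⟨Finset.mem_univ _, rfl⟩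
  · intro hc u v huv
    rcases Multiset.mem_map.1 huv with ⟨p, hp, hpe⟩
    rw [Finset.mem_val, Finset.mem_filter] at hp
    have hφ : (p.1 : ℕ) + 1 = (p.2 : ℕ) := hp.2
    have h2 : (p.1 : ℕ) + 1 < n := by rw [hφ]; exact p.2.isLt
    have hchain := hc (p.1 : ℕ) h2
    have e1 : (⟨(p.1 : ℕ), Nat.lt_of_succ_lt h2⟩ : Fin n) = p.1 := Fin.ext rfl
    have e2 : (⟨(p.1 : ℕ) + 1, h2⟩ : Fin n) = p.2 := Fin.ext hφ
    rw [e1, e2] at hchain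
    rcases Sym2.eq_iff.1 hpe with ⟨h3, h4⟩ | ⟨h3, h4⟩
    · rw [← h3, ← h4]; exact hchain
    · rw [← h3, ← h4]; exact hchain.symm

lemma chainSer_Ne (n : ℕ) : chainSer (fun x y => x ≠ y) n = XP n := by
  rw [XP, X_cnt]
  unfold chainSer
  exact cnt_congr _ _ (Equiv.subtypeEquivRight (fun κ => (Proper_pathE n κ).symm)) (fun x => rfl)

lemma chainSer_congr (R R' : ℕ+ → ℕ+ → Prop) (h : ∀ x y, R x y ↔ R' x y) (n : ℕ) :
    chainSer R n = chainSer R' n := by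
  unfold chainSer
  exact cnt_congr _ _ (Equiv.subtypeEquivRight
    (fun κ => forall_congr' (fun i => forall_congr' (fun hi => h _ _)))) (fun x => rfl)

lemma XP_zero : XP 0 = 1 := by
  rw [← chainSer_Ne]
  unfold chainSer
  have : (fun κ : {κ : Fin 0 → ℕ+ // chainP (fun x y => x ≠ y) 0 κ} =>
      ∑ v, Finsupp.single (κ.1 v) 1) = (fun _ => (0 : ℕ+ →₀ ℕ)) := by
    funext κ; simp
  rw [this]
  haveI : Unique {κ : Fin 0 → ℕ+ // chainP (fun x y => x ≠ y) 0 κ} :=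
    { default := ⟨fun v => v.elim0, fun i h => absurd h (by omega)⟩
      uniq := fun κ => Subtype.ext (funext fun v => v.elim0) }
  exact cnt_one

lemma chain_const {a : ℕ} (κ : Fin a → ℕ+) (hc : chainP (fun x y => x = y) a κ)
    (h0 : 0 < a) : ∀ v : Fin a, κ v = κ ⟨0, h0⟩ := by
  have key : ∀ i : ℕ, ∀ h : i < a, κ ⟨i, h⟩ = κ ⟨0, h0⟩ := by
    intro i
    induction i with
    | zero => intro h; rfl
    | succ k ih =>
      intro h
      have := hc k h
      rw [← this]
      exact ih (by omega)
  intro v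
  have := key (v : ℕ) v.isLt
  rwa [Fin.eta] at this

lemma chainSer_Eq (a : ℕ) : chainSer (fun x y => x = y) a = pS a := by
  rcases Nat.eq_zero_or_pos a with rfl | h0
  · rw [pS_zero]
    unfold chainSer
    have : (fun κ : {κ : Fin 0 → ℕ+ // chainP (fun x y => x = y) 0 κ} =>
        ∑ v, Finsupp.single (κ.1 v) 1) = (fun _ => (0 : ℕ+ →₀ ℕ)) := by
      funext κ; simp
    rw [this]
    haveI : Unique {κ : Fin 0 → ℕ+ // chainP (fun x y => x = y) 0 κ} :=
      { default := ⟨fun v => v.elim0, fun i h => absurd h (by omega)⟩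
        uniq := fun κ => Subtype.ext (funext fun v => v.elim0) }
    exact cnt_one
  · apply MvPowerSeries.ext; intro m
    rw [coeff_pS]
    unfold chainSer
    rw [coeff_cnt]
    have hmon : ∀ j : ℕ+, (∑ v : Fin a, Finsupp.single j (1:ℕ)) = Finsupp.single j a := by
      intro j
      rw [Finset.sum_const, Finset.card_univ, Fintype.card_fin, Finsupp.smul_single,
        smul_eq_mul, mul_one]
    have e : {κs : {κ : Fin a → ℕ+ // chainP (fun x y => x = y) a κ} //
        (∑ v, Finsupp.single (κs.1 v) 1) = m} ≃ {j : ℕ+ // m = Finsupp.single j a} :=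
      { toFun := fun κs => ⟨κs.1.1 ⟨0, h0⟩, by
          have h2 : (∑ v, Finsupp.single (κs.1.1 v) 1)
              = Finsupp.single (κs.1.1 ⟨0, h0⟩) a := by
            rw [Finset.sum_congr rfl (fun v _ => by
              rw [chain_const κs.1.1 κs.1.2 h0 v]), hmon]
          exact κs.2.symm.trans h2⟩
        invFun := fun j => ⟨⟨fun _ => j.1, fun i h => rfl⟩, by rw [hmon]; exact j.2.symm⟩
        left_inv := fun κs => Subtype.ext (Subtype.ext (funext fun v =>
          (chain_const κs.1.1 κs.1.2 h0 v).symm))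
        right_inv := fun j => rfl }
    rw [Nat.card_congr e]
    by_cases h : ∃ j : ℕ+, m = Finsupp.single j a
    · haveI : Nonempty {j : ℕ+ // m = Finsupp.single j a} := ⟨⟨h.choose, h.choose_spec⟩⟩
      haveI : Subsingleton {j : ℕ+ // m = Finsupp.single j a} := ⟨by
        rintro ⟨j1, h1⟩ ⟨j2, h2⟩
        have : Finsupp.single j1 a = Finsupp.single j2 a := by rw [← h1, ← h2]
        exact Subtype.ext (Finsupp.single_left_injective (by omega) this)⟩
      rw [Nat.card_unique, if_pos h]
      norm_num
    · haveI : IsEmpty {j : ℕ+ // m = Finsupp.single j a} := ⟨fun j => h ⟨j.1, j.2⟩⟩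
      rw [Nat.card_of_isEmpty, if_neg h]
      norm_num

lemma comps_spec : ∀ n : ℕ, ∀ α ∈ comps n, α.sum = n ∧ ∀ x ∈ α, 0 < x := by
  intro n
  induction n using Nat.strong_induction_on with
  | _ n ih =>
    match n with
    | 0 =>
      intro α hα
      rw [comps] at hα
      simp only [List.mem_singleton] at hα
      subst hα
      exact ⟨rfl, by simp⟩
    | (k + 1) =>
      intro α hα
      rw [comps] at hα
      rcases List.mem_flatMap.1 hα with ⟨j, hj, hα2⟩
      rcases List.mem_map.1 hα2 with ⟨c, hc, rfl⟩
      have hjlt : j.1 < k + 1 := List.mem_range.1 j.2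
      obtain ⟨hsum, hpos⟩ := ih j.1 hjlt c hc
      constructor
      · simp only [List.sum_cons, hsum]; omega
      · intro x hx
        rcases List.mem_cons.1 hx with rfl | hx'
        · omega
        · exact hpos x hx'

lemma length_le_sum : ∀ (α : List ℕ), (∀ x ∈ α, 0 < x) → α.length ≤ α.sum := by
  intro α
  induction α with
  | nil => simp
  | cons a l ih =>
    intro h
    simp only [List.length_cons, List.sum_cons]
    have h1 := h a (by simp)
    have h2 := ih (fun x hx => h x (by simp [hx]))
    omega

lemma list_sum_map_flatMap {A B : Type*} {M : Type*} [AddCommMonoid M]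
    (L : List A) (g : A → List B) (f : B → M) :
    ((L.flatMap g).map f).sum = (L.map (fun a => ((g a).map f).sum)).sum := by
  induction L with
  | nil => simp
  | cons a l ih => simp [List.flatMap_cons, List.map_append, List.sum_append, ih]

lemma list_range_map_sum {M : Type*} [AddCommMonoid M] (n : ℕ) (f : ℕ → M) :
    ((List.range n).map f).sum = ∑ j ∈ Finset.range n, f j := by
  induction n with
  | zero => simp
  | succ k ih => simp [List.range_succ, Finset.sum_range_succ, ih]

noncomputable def SSer (g : ℕ → MvPowerSeries ℕ+ ℚ) (n : ℕ) : MvPowerSeries ℕ+ ℚ :=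
  ((comps n).map fun α => ((-1 : ℚ) ^ (n - α.length)) • (α.map g).prod).sum

lemma SSer_zero (g : ℕ → MvPowerSeries ℕ+ ℚ) : SSer g 0 = 1 := by
  unfold SSer
  rw [comps]
  simp

lemma SSer_succ (g : ℕ → MvPowerSeries ℕ+ ℚ) (n : ℕ) :
    SSer g (n + 1) = ∑ j ∈ Finset.range (n + 1),
      ((-1 : ℚ) ^ (n - j)) • (g (n + 1 - j) * SSer g j) := by
  unfold SSer
  rw [comps, list_sum_map_flatMap]
  have hattach : ((List.range (n + 1)).attach.map
      (fun j => (((comps j.1).map (fun c => (n + 1 - j.1) :: c)).map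
        (fun α => ((-1 : ℚ) ^ (n + 1 - α.length)) • (α.map g).prod)).sum)).sum
      = ((List.range (n + 1)).map
      (fun j => (((comps j).map (fun c => (n + 1 - j) :: c)).map
        (fun α => ((-1 : ℚ) ^ (n + 1 - α.length)) • (α.map g).prod)).sum)).sum := by
    congr 1
    exact List.attach_map_val (l := List.range (n + 1))
      (f := fun j => (((comps j).map (fun c => (n + 1 - j) :: c)).map
        (fun α => ((-1 : ℚ) ^ (n + 1 - α.length)) • (α.map g).prod)).sum)
  rw [hattach, list_range_map_sum]
  apply Finset.sum_congr rfl
  intro j hj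
  rw [Finset.mem_range] at hj
  rw [List.map_map]
  have hpt : ∀ β ∈ comps j,
      ((fun α => ((-1 : ℚ) ^ (n + 1 - α.length)) • (α.map g).prod) ∘ (fun c => (n + 1 - j) :: c)) β
      = (((-1 : ℚ) ^ (n - j)) • g (n + 1 - j)) * (((-1 : ℚ) ^ (j - β.length)) • (β.map g).prod) := by
    intro β hβ
    obtain ⟨hsum, hpos⟩ := comps_spec j β hβ
    have hlen : β.length ≤ j := hsum ▸ length_le_sum β hpos
    simp only [Function.comp_apply, List.length_cons, List.map_cons, List.prod_cons]
    rw [smul_mul_smul_comm]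
    congr 1
    rw [← pow_add]
    congr 1
    omega
  rw [List.map_congr_left hpt, List.sum_map_mul_left, smul_mul_assoc]

lemma XP_eq_SSer_pS : ∀ n : ℕ, XP n = SSer pS n := by
  intro n
  induction n using Nat.strong_induction_on with
  | _ n ih =>
    match n with
    | 0 => rw [XP_zero, SSer_zero]
    | (k + 1) =>
      have hJ := lemJ (fun x y : ℕ+ => x = y) (show 1 ≤ k + 1 by omega)
      have h1 : ∀ a ∈ Finset.range (k + 2),
          ((-1 : ℚ) ^ a) • (chainSer (fun x y : ℕ+ => x = y) a *
            chainSer (fun x y : ℕ+ => ¬ x = y) (k + 1 - a))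
          = ((-1 : ℚ) ^ a) • (pS a * XP (k + 1 - a)) := by
        intro a _
        rw [chainSer_Eq, chainSer_congr (fun x y : ℕ+ => ¬ x = y) (fun x y => x ≠ y)
          (fun x y => Iff.rfl), chainSer_Ne]
      rw [Finset.sum_congr rfl h1, Finset.sum_range_succ'] at hJ
      simp only [Nat.sub_zero, pow_zero, one_smul, pS_zero, one_mul] at hJ
      have hXP : XP (k + 1) = ∑ i ∈ Finset.range (k + 1),
          ((-1 : ℚ) ^ i) • (pS (i + 1) * XP (k - i)) := by
        have this := hJ
        have h2 : ∀ i ∈ Finset.range (k + 1),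
            ((-1 : ℚ) ^ (i + 1)) • (pS (i + 1) * XP (k + 1 - (i + 1)))
            = -(((-1 : ℚ) ^ i) • (pS (i + 1) * XP (k - i))) := by
          intro i _
          rw [pow_succ]
          rw [show k + 1 - (i + 1) = k - i from by omega]
          rw [mul_comm ((-1 : ℚ) ^ i) (-1), ← smul_smul]
          rw [neg_one_smul]
        rw [Finset.sum_congr rfl h2, Finset.sum_neg_distrib, neg_add_eq_zero] at this
        exact this.symm
      rw [SSer_succ]
      have h3 : ∀ j ∈ Finset.range (k + 1),
          ((-1 : ℚ) ^ (k - j)) • (pS (k + 1 - j) * SSer pS j)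
          = ((-1 : ℚ) ^ (k - j)) • (pS (k + 1 - j) * XP j) := by
        intro j hj
        rw [← ih j (by rw [Finset.mem_range] at hj; omega)]
      rw [Finset.sum_congr rfl h3]
      rw [← Finset.sum_range_reflect]
      have h4 : ∀ j ∈ Finset.range (k + 1),
          ((-1 : ℚ) ^ (k - (k + 1 - 1 - j))) • (pS (k + 1 - (k + 1 - 1 - j)) * XP (k + 1 - 1 - j))
          = ((-1 : ℚ) ^ j) • (pS (j + 1) * XP (k - j)) := by
        intro j hj
        rw [Finset.mem_range] at hj
        rw [show k + 1 - 1 - j = k - j from by omega, show k - (k - j) = j from by omega,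
          show k + 1 - (k - j) = j + 1 from by omega]
      rw [Finset.sum_congr rfl h4, ← hXP]

lemma pS_eq_SSer_XP : ∀ n : ℕ, pS n = SSer XP n := by
  intro n
  induction n using Nat.strong_induction_on with
  | _ n ih =>
    match n with
    | 0 => rw [pS_zero, SSer_zero]
    | (k + 1) =>
      have hJ := lemJ (fun x y : ℕ+ => x ≠ y) (show 1 ≤ k + 1 by omega)
      have h1 : ∀ a ∈ Finset.range (k + 2),
          ((-1 : ℚ) ^ a) • (chainSer (fun x y : ℕ+ => x ≠ y) a *
            chainSer (fun x y : ℕ+ => ¬ x ≠ y) (k + 1 - a))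
          = ((-1 : ℚ) ^ a) • (XP a * pS (k + 1 - a)) := by
        intro a _
        rw [chainSer_Ne, chainSer_congr (fun x y : ℕ+ => ¬ x ≠ y) (fun x y : ℕ+ => x = y)
          (fun x y => not_not), chainSer_Eq]
      rw [Finset.sum_congr rfl h1, Finset.sum_range_succ'] at hJ
      simp only [Nat.sub_zero, pow_zero, one_smul, XP_zero, one_mul] at hJ
      have hpS : pS (k + 1) = ∑ i ∈ Finset.range (k + 1),
          ((-1 : ℚ) ^ i) • (XP (i + 1) * pS (k - i)) := by
        have h2 : ∀ i ∈ Finset.range (k + 1),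
            ((-1 : ℚ) ^ (i + 1)) • (XP (i + 1) * pS (k + 1 - (i + 1)))
            = -(((-1 : ℚ) ^ i) • (XP (i + 1) * pS (k - i))) := by
          intro i _
          rw [pow_succ]
          rw [show k + 1 - (i + 1) = k - i from by omega]
          rw [mul_comm ((-1 : ℚ) ^ i) (-1), ← smul_smul]
          rw [neg_one_smul]
        rw [Finset.sum_congr rfl h2, Finset.sum_neg_distrib, neg_add_eq_zero] at hJ
        exact hJ.symm
      rw [SSer_succ]
      have h3 : ∀ j ∈ Finset.range (k + 1),
          ((-1 : ℚ) ^ (k - j)) • (XP (k + 1 - j) * SSer XP j)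
          = ((-1 : ℚ) ^ (k - j)) • (XP (k + 1 - j) * pS j) := by
        intro j hj
        rw [← ih j (by rw [Finset.mem_range] at hj; omega)]
      rw [Finset.sum_congr rfl h3]
      rw [← Finset.sum_range_reflect]
      have h4 : ∀ j ∈ Finset.range (k + 1),
          ((-1 : ℚ) ^ (k - (k + 1 - 1 - j))) • (XP (k + 1 - (k + 1 - 1 - j)) * pS (k + 1 - 1 - j))
          = ((-1 : ℚ) ^ j) • (XP (j + 1) * pS (k - j)) := by
        intro j hj
        rw [Finset.mem_range] at hj
        rw [show k + 1 - 1 - j = k - j from by omega, show k - (k - j) = j from by omega,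
          show k + 1 - (k - j) = j + 1 from by omega]
      rw [Finset.sum_congr rfl h4, ← hpS]

lemma finite_le_fiber {T : Type*} (F : T → (ℕ+ →₀ ℕ))
    (hF : ∀ m', Finite {x : T // F x = m'}) (m : ℕ+ →₀ ℕ) :
    Finite {x : T // F x ≤ m} := by
  have hsub : {x : T | F x ≤ m} ⊆
      ⋃ q ∈ (Finset.HasAntidiagonal.antidiagonal m : Finset ((ℕ+ →₀ ℕ) × (ℕ+ →₀ ℕ))), {x : T | F x = q.1} := by
    intro x hx
    simp only [Set.mem_iUnion]
    exact ⟨(F x, m - F x), Finset.HasAntidiagonal.mem_antidiagonal.2 (add_tsub_cancel_of_le hx), rfl⟩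
  have hfin : {x : T | F x ≤ m}.Finite := by
    apply Set.Finite.subset _ hsub
    apply Set.Finite.biUnion (Finset.finite_toSet _)
    intro q _
    exact @Set.toFinite _ _ (hF q.1)
  exact hfin.to_subtype

lemma finite_pi_fiber {k : ℕ} {T : Fin k → Type*} (F : ∀ i, T i → (ℕ+ →₀ ℕ))
    (hF : ∀ i m', Finite {x : T i // F i x = m'}) (m : ℕ+ →₀ ℕ) :
    Finite {g : ∀ i, T i // (∑ i, F i (g i)) = m} := by
  haveI : ∀ i, Finite {x : T i // F i x ≤ m} := fun i => finite_le_fiber (F i) (hF i) m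
  have inj : Function.Injective (fun g : {g : ∀ i, T i // (∑ i, F i (g i)) = m} =>
      (fun i => (⟨g.1 i, le_trans (Finset.single_le_sum (f := fun j => F j (g.1 j))
          (fun j _ => zero_le) (Finset.mem_univ i)) (le_of_eq g.2)⟩ :
        {x : T i // F i x ≤ m}))) := by
    intro g h hgh
    apply Subtype.ext; funext i
    exact congrArg Subtype.val (congrFun hgh i)
  exact Finite.of_injective _ inj

lemma cnt_pi : ∀ (k : ℕ) (T : Fin k → Type) (F : ∀ i, T i → (ℕ+ →₀ ℕ)),
    (∀ i m', Finite {x : T i // F i x = m'}) →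
    cnt (fun g : ∀ i, T i => ∑ i, F i (g i)) = ∏ i, cnt (F i) := by
  intro k
  induction k with
  | zero =>
    intro T F hF
    have h1 : (fun g : ∀ i, T i => ∑ i, F i (g i)) = (fun _ => (0 : ℕ+ →₀ ℕ)) := by
      funext g; simp
    rw [h1, cnt_one]
    simp
  | succ k ih =>
    intro T F hF
    rw [Fin.prod_univ_succ]
    rw [← ih (fun i => T i.succ) (fun i => F i.succ) (fun i m' => hF i.succ m')]
    rw [cnt_mul _ _ (hF 0) (finite_pi_fiber _ (fun i m' => hF i.succ m') )]
    exact cnt_congr _ _ (Fin.consEquiv T).symm (fun g => by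
      simp [Fin.sum_univ_succ, Fin.consEquiv, Fin.tail])

lemma Proper_unionE {k : ℕ} {mf : Fin k → ℕ} (Es : ∀ i, Multiset (Sym2 (Fin (mf i))))
    (κ : (Σ i, Fin (mf i)) → ℕ+) :
    Proper (unionE Es) κ ↔ ∀ i, Proper (Es i) (fun v => κ ⟨i, v⟩) := by
  constructor
  · intro h i a b hab
    apply h
    apply Multiset.mem_sum.2
    refine ⟨i, Finset.mem_univ i, ?_⟩
    exact Multiset.mem_map.2 ⟨s(a, b), hab, rfl⟩
  · intro h u v huv
    rcases Multiset.mem_sum.1 huv with ⟨i, _, hei⟩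
    rcases Multiset.mem_map.1 hei with ⟨e, he, hme⟩
    induction e using Sym2.ind with
    | _ a b =>
      rw [Sym2.map_pair_eq] at hme
      have hne := h i a b he
      rcases Sym2.eq_iff.1 hme with ⟨h3, h4⟩ | ⟨h3, h4⟩
      · rw [← h3, ← h4]; exact hne
      · rw [← h3, ← h4]; exact hne.symm

noncomputable def unionEquiv (k : ℕ) (mf : Fin k → ℕ)
    (Es : ∀ i, Multiset (Sym2 (Fin (mf i)))) :
    {κ : (Σ i, Fin (mf i)) → ℕ+ // Proper (unionE Es) κ} ≃
      ∀ i, {κi : Fin (mf i) → ℕ+ // Proper (Es i) κi} :=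
  (Equiv.subtypeEquivRight (fun κ => Proper_unionE Es κ)).trans
    (((Equiv.piCurry (fun (i : Fin k) (_ : Fin (mf i)) => ℕ+)).subtypeEquiv
      (q := fun f => ∀ i, Proper (Es i) (f i)) (fun κ => Iff.rfl)).trans
      (Equiv.subtypePiEquivPi (p := fun i κi => Proper (Es i) κi)))

lemma X_union_prod (k : ℕ) (mf : Fin k → ℕ) (Es : ∀ i, Multiset (Sym2 (Fin (mf i)))) :
    X (unionE Es) (fun _ => 1) = ∏ i, X (Es i) (fun _ => 1) := by
  rw [X_cnt]
  have step : cnt (fun κ : {κ : (Σ i, Fin (mf i)) → ℕ+ // Proper (unionE Es) κ} =>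
      ∑ v, Finsupp.single (κ.1 v) 1)
      = cnt (fun g : ∀ i, {κi : Fin (mf i) → ℕ+ // Proper (Es i) κi} =>
          ∑ i, ∑ v, Finsupp.single ((g i).1 v) 1) := by
    apply cnt_congr _ _ (unionEquiv k mf Es)
    intro κ
    rw [← Finset.univ_sigma_univ, Finset.sum_sigma]
    rfl
  rw [step, cnt_pi _ _ _ (fun i m' => finite_mon_fiber'
    (fun κi : {κi : Fin (mf i) → ℕ+ // Proper (Es i) κi} => κi.1)
    (fun _ _ h => Subtype.ext h) m')]
  apply Finset.prod_congr rfl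
  intro i _
  rw [X_cnt]

lemma XPaths_prod (L : List ℕ) : XPaths L = (L.map XP).prod := by
  show X (unionE (fun i : Fin L.length => pathE (L.get i))) (fun _ => 1) = _
  rw [X_union_prod]
  have h1 : ∀ i : Fin L.length, X (pathE (L.get i)) (fun _ => 1) = XP (L.get i) := fun i => rfl
  rw [Finset.prod_congr rfl (fun i _ => h1 i), ← List.prod_ofFn]
  congr 1
  conv_rhs => rw [← List.ofFn_get L]
  rw [List.map_ofFn]
  rfl

lemma refinements_spec : ∀ l : List ℕ, ∀ α ∈ refinements l,
    α.sum = l.sum ∧ ∀ x ∈ α, 0 < x := by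
  intro l
  induction l with
  | nil =>
    intro α hα
    rw [refinements] at hα
    simp only [List.mem_singleton] at hα
    subst hα
    exact ⟨rfl, by simp⟩
  | cons a l ih =>
    intro α hα
    rw [refinements] at hα
    rcases List.mem_flatMap.1 hα with ⟨c, hc, hα2⟩
    rcases List.mem_map.1 hα2 with ⟨r, hr, rfl⟩
    obtain ⟨hcs, hcp⟩ := comps_spec a c hc
    obtain ⟨hrs, hrp⟩ := ih r hr
    constructor
    · rw [List.sum_append, hcs, hrs, List.sum_cons]
    · intro x hx
      rcases List.mem_append.1 hx with hx' | hx'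
      · exact hcp x hx'
      · exact hrp x hx'

lemma expand (g h : ℕ → MvPowerSeries ℕ+ ℚ) (hgh : ∀ a, g a = SSer h a) :
    ∀ l : List ℕ, (l.map g).prod =
      ((refinements l).map fun α =>
        ((-1 : ℚ) ^ (l.sum - α.length)) • (α.map h).prod).sum := by
  intro l
  induction l with
  | nil =>
    rw [refinements]
    simp
  | cons a l ih =>
    rw [List.map_cons, List.prod_cons, ih, hgh a]
    rw [show refinements (a :: l)
        = (comps a).flatMap (fun c => (refinements l).map (fun r => c ++ r)) from rfl]
    rw [list_sum_map_flatMap]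
    unfold SSer
    rw [← List.sum_map_mul_right]
    congr 1
    apply List.map_congr_left
    intro c hc
    obtain ⟨hcs, hcp⟩ := comps_spec a c hc
    have hcl : c.length ≤ a := hcs ▸ length_le_sum c hcp
    rw [← List.sum_map_mul_left, List.map_map]
    congr 1
    apply List.map_congr_left
    intro r hr
    obtain ⟨hrs, hrp⟩ := refinements_spec l r hr
    have hrl : r.length ≤ l.sum := hrs ▸ length_le_sum r hrp
    simp only [Function.comp_apply]
    rw [smul_mul_smul_comm, ← pow_add, ← List.prod_append, ← List.map_append]
    congr 2
    · rw [List.sum_cons, List.length_append]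
      omega


/-- **Proposition.** For every partition `λ`:
`p_λ = ∑_{α ≼ λ} (-1)^{|λ| - ℓ(α)} X_{P_{α̃}}` and
`X_{P_λ} = ∑_{α ≼ λ} (-1)^{|λ| - ℓ(α)} p_{α̃}`, the sums over all refinements `α` of `λ`. -/
theorem path_basis_power_sum_expansions
    (l : List ℕ) (hsort : l.Pairwise (· ≥ ·)) (hpos : ∀ x ∈ l, 0 < x) :
    pProd l =
      ((refinements l).map fun α =>
        ((-1 : ℚ) ^ (l.sum - α.length)) • XPaths (sortDesc α)).sum ∧
    XPaths l =
      ((refinements l).map fun α =>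
        ((-1 : ℚ) ^ (l.sum - α.length)) • pProd (sortDesc α)).sum := by
  constructor
  · have h1 : pProd l = ((refinements l).map fun α =>
        ((-1 : ℚ) ^ (l.sum - α.length)) • (α.map XP).prod).sum :=
      expand pS XP pS_eq_SSer_XP l
    rw [h1]
    congr 1
    apply List.map_congr_left
    intro α hα
    congr 1
    rw [XPaths_prod]
    exact (((List.perm_insertionSort (· ≥ ·) α).map XP).prod_eq).symm
  · have h1 : XPaths l = ((refinements l).map fun α =>
        ((-1 : ℚ) ^ (l.sum - α.length)) • (α.map pS).prod).sum := by
      rw [XPaths_prod]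
      exact expand XP pS XP_eq_SSer_pS l
    rw [h1]
    congr 1
    apply List.map_congr_left
    intro α hα
    congr 1
    show (α.map pS).prod = ((sortDesc α).map pS).prod
    exact (((List.perm_insertionSort (· ≥ ·) α).map pS).prod_eq).symm


end CSF
end
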